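/- arXiv:2409.07986 — 3 statements merged into one kernel-verified Lean document; each statement's English description precedes it below -/
import Mathlib

section
/- For every ideal I of R_S one has Ī ⊆ I°: every element of R_S that is integral over I lies in the ideal generated by the monomials x^k with k ∈ S ∩ Γ₊(I). -/
open scoped BigOperators

noncomputable section

namespace ToricNewton

/-- The submonoid `S ⊆ ℤⁿ` generated by `b₁, …, b_r`. -/
def Sgroup {n r : ℕ} (b : Fin r → Fin n → ℤ) : AddSubmonoid (Fin n → ℤ) :=
  AddSubmonoid.closure (Set.range b)

/-- View an exponent `d ∈ ℕⁿ` as a point of `ℤⁿ`. -/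
def expToZ {n : ℕ} (d : Fin n →₀ ℕ) : Fin n → ℤ := fun i => (d i : ℤ)

lemma expToZ_zero {n : ℕ} : expToZ (0 : Fin n →₀ ℕ) = 0 := by
  funext i; simp [expToZ]

lemma expToZ_add {n : ℕ} (d e : Fin n →₀ ℕ) : expToZ (d + e) = expToZ d + expToZ e := by
  funext i; simp [expToZ]

/-- `R_S`: the subalgebra of `ℂ[[x₁,…,xₙ]]` of series with support in `S`;
this is the algebraic model of the local ring `𝒪_{X(S)}` at the origin. -/
def RS {n r : ℕ} (b : Fin r → Fin n → ℤ) : Subalgebra ℂ (MvPowerSeries (Fin n) ℂ) where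
  carrier := { f | ∀ d : Fin n →₀ ℕ, MvPowerSeries.coeff d f ≠ 0 → expToZ d ∈ Sgroup b }
  add_mem' := by
    intro f g hf hg d hd
    rw [Set.mem_setOf_eq] at hf hg
    rw [map_add] at hd
    by_cases h1 : MvPowerSeries.coeff d f ≠ 0
    · exact hf d h1
    · push_neg at h1
      exact hg d (by simpa [h1] using hd)
  zero_mem' := by intro d hd; simp at hd
  one_mem' := by
    intro d hd
    rw [MvPowerSeries.coeff_one] at hd
    split_ifs at hd with h
    · subst h; simpa [expToZ_zero] using (Sgroup b).zero_mem
    · exact absurd rfl hd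
  mul_mem' := by
    intro f g hf hg d hd
    rw [Set.mem_setOf_eq] at hf hg
    rw [MvPowerSeries.coeff_mul] at hd
    obtain ⟨p, hp, hne⟩ := Finset.exists_ne_zero_of_sum_ne_zero hd
    rw [Finset.HasAntidiagonal.mem_antidiagonal] at hp
    have h1 : MvPowerSeries.coeff p.1 f ≠ 0 := left_ne_zero_of_mul hne
    have h2 : MvPowerSeries.coeff p.2 g ≠ 0 := right_ne_zero_of_mul hne
    have := (Sgroup b).add_mem (hf _ h1) (hg _ h2)
    rwa [← expToZ_add, hp] at this
  algebraMap_mem' := by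
    intro c d hd
    rw [MvPowerSeries.algebraMap_apply, MvPowerSeries.coeff_C] at hd
    split_ifs at hd with h
    · subst h; simpa [expToZ_zero] using (Sgroup b).zero_mem
    · exact absurd rfl hd

/-- The exponent in `ℕⁿ` associated to `s ∈ ℤⁿ` (with nonnegative entries). -/
def natExp {n : ℕ} (s : Fin n → ℤ) : Fin n →₀ ℕ :=
  Finsupp.equivFunOnFinite.symm fun i => (s i).toNat

/-- The monomial power series `x^s` with coefficient `1`. -/
def monomialZ {n : ℕ} (s : Fin n → ℤ) : MvPowerSeries (Fin n) ℂ :=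
  MvPowerSeries.monomial (natExp s) 1

/-- View a lattice point as a point of `ℝⁿ`. -/
def toReal {n : ℕ} (k : Fin n → ℤ) : Fin n → ℝ := fun i => (k i : ℝ)

/-- The standard pairing on `ℝⁿ`. -/
def dotR {n : ℕ} (x v : Fin n → ℝ) : ℝ := ∑ i, x i * v i

/-- The cone of `S`, i.e. nonnegative real combinations of `b₁, …, b_r`. -/
def coneS {n r : ℕ} (b : Fin r → Fin n → ℤ) : Set (Fin n → ℝ) :=
  { x | ∃ lam : Fin r → ℝ, (∀ i, 0 ≤ lam i) ∧ x = ∑ i, lam i • toReal (b i) }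

/-- The dual cone of `cone(S)`. -/
def dualConeS {n r : ℕ} (b : Fin r → Fin n → ℤ) : Set (Fin n → ℝ) :=
  { u | ∀ v ∈ coneS b, 0 ≤ dotR u v }

/-- The Newton polyhedron `Γ₊(A)` of `A ⊆ S`: the convex hull of
`{k + v : k ∈ A, v ∈ cone(S)}`. -/
def NewtonPoly {n r : ℕ} (b : Fin r → Fin n → ℤ) (A : Set (Fin n → ℤ)) :
    Set (Fin n → ℝ) :=
  convexHull ℝ { x | ∃ k ∈ A, ∃ v ∈ coneS b, x = toReal k + v }

/-- `ℓ(v, P) = inf {⟨k, v⟩ : k ∈ P}`. -/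
def ellP {n : ℕ} (P : Set (Fin n → ℝ)) (v : Fin n → ℝ) : ℝ :=
  sInf ((fun k => dotR k v) '' P)

/-- `Δ(v, P) = {k ∈ P : ⟨k, v⟩ = ℓ(v, P)}`. -/
def faceP {n : ℕ} (P : Set (Fin n → ℝ)) (v : Fin n → ℝ) : Set (Fin n → ℝ) :=
  { k ∈ P | dotR k v = ellP P v }

/-- The support of a power series, as a subset of `ℤⁿ`. -/
def suppZ {n : ℕ} (g : MvPowerSeries (Fin n) ℂ) : Set (Fin n → ℤ) :=
  { s | ∃ d : Fin n →₀ ℕ, MvPowerSeries.coeff d g ≠ 0 ∧ s = expToZ d }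

/-- The Newton polyhedron `Γ₊(I)` of an ideal `I ⊆ R_S`. -/
def NewtonIdeal {n r : ℕ} (b : Fin r → Fin n → ℤ) (I : Ideal ↥(RS b)) :
    Set (Fin n → ℝ) :=
  NewtonPoly b (⋃ g ∈ (I : Set ↥(RS b)), suppZ (g : MvPowerSeries (Fin n) ℂ))

/-- `h` is integral over the ideal `I`:
`h^m + a₁ h^(m-1) + ⋯ + a_m = 0` with `aᵢ ∈ Iⁱ`. -/
def IsIntegralOverIdeal {R : Type*} [CommRing R] (I : Ideal R) (h : R) : Prop :=
  ∃ m : ℕ, 0 < m ∧ ∃ a : Fin m → R, (∀ i : Fin m, a i ∈ I ^ ((i : ℕ) + 1)) ∧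
    h ^ m + ∑ i : Fin m, a i * h ^ (m - 1 - (i : ℕ)) = 0

/-- `I°`: the ideal generated by the monomials `x^k` with `k ∈ S ∩ Γ₊(I)`. -/
def Icirc {n r : ℕ} (b : Fin r → Fin n → ℤ) (I : Ideal ↥(RS b)) : Ideal ↥(RS b) :=
  Ideal.span { m : ↥(RS b) | ∃ s : Fin n → ℤ, s ∈ Sgroup b ∧
    toReal s ∈ NewtonIdeal b I ∧ (m : MvPowerSeries (Fin n) ℂ) = monomialZ s }

/-- `C(Ī)`: the convex hull of the exponents of the monomials in the integral closure. -/
def CIbar {n r : ℕ} (b : Fin r → Fin n → ℤ) (I : Ideal ↥(RS b)) : Set (Fin n → ℝ) :=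
  convexHull ℝ (toReal '' { s : Fin n → ℤ | s ∈ Sgroup b ∧
    ∃ m : ↥(RS b), (m : MvPowerSeries (Fin n) ℂ) = monomialZ s ∧ IsIntegralOverIdeal I m })

/-- The coefficient of `g` at a lattice exponent `v`. -/
def coeffZ {n : ℕ} (g : MvPowerSeries (Fin n) ℂ) (v : Fin n → ℤ) : ℂ :=
  MvPowerSeries.coeff (natExp v) g

/-- `L(g_Δ)` evaluated at `z`: the polynomial `∑_{v ∈ supp(g) ∩ Δ} a_v z^v`. -/
def Lface {n : ℕ} (g : MvPowerSeries (Fin n) ℂ) (Δ : Set (Fin n → ℝ))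
    (z : Fin n → ℂ) : ℂ :=
  ∑ᶠ v ∈ { v : Fin n → ℤ | v ∈ suppZ g ∧ toReal v ∈ Δ },
    coeffZ g v * ∏ i, z i ^ (v i)

/-- `Δ` is a (nonempty) compact face of the polyhedron `P`. -/
def IsCompactFace {n r : ℕ} (b : Fin r → Fin n → ℤ) (P Δ : Set (Fin n → ℝ)) : Prop :=
  (∃ v ∈ dualConeS b, Δ = faceP P v) ∧ Δ.Nonempty ∧ IsCompact Δ

/-- A finite generating family of `I` is non-degenerate if on every compact face `Δ`
of `Γ₊(I)` the polynomials `L((gⱼ)_Δ)` have no common zero in the torus `(ℂ*)ⁿ`. -/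
def NondegenFamily {n r : ℕ} (b : Fin r → Fin n → ℤ) {l : ℕ}
    (g : Fin l → ↥(RS b)) (I : Ideal ↥(RS b)) : Prop :=
  ∀ Δ : Set (Fin n → ℝ), IsCompactFace b (NewtonIdeal b I) Δ →
    ¬ ∃ z : Fin n → ℂ, (∀ i, z i ≠ 0) ∧
      ∀ j, Lface (g j : MvPowerSeries (Fin n) ℂ) Δ z = 0

/-- An ideal is non-degenerate if it admits a non-degenerate finite generating family. -/
def Nondegenerate {n r : ℕ} (b : Fin r → Fin n → ℤ) (I : Ideal ↥(RS b)) : Prop :=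
  ∃ l : ℕ, ∃ g : Fin l → ↥(RS b), Ideal.span (Set.range g) = I ∧ NondegenFamily b g I

/-- The toric ideal `I_S ⊆ ℂ[x₁,…,x_r]`, generated by the binomials
`x^{α₊} - x^{α₋}` over the relations `α` of `b₁, …, b_r`. -/
def toricIdeal {n r : ℕ} (b : Fin r → Fin n → ℤ) : Ideal (MvPolynomial (Fin r) ℂ) :=
  Ideal.span { p | ∃ α : Fin r → ℤ, (∑ i, α i • b i) = 0 ∧
    p = (∏ i, MvPolynomial.X i ^ (α i).toNat) - ∏ i, MvPolynomial.X i ^ (-(α i)).toNat }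

/-- The affine toric variety `X(S) = V(I_S) ⊆ ℂ^r`. -/
def XS {n r : ℕ} (b : Fin r → Fin n → ℤ) : Set (Fin r → ℂ) :=
  { x | ∀ p ∈ toricIdeal b, MvPolynomial.eval x p = 0 }

/-! ### Auxiliary lemmas for the proof of STATEMENT 3 -/

section Aux

open scoped Pointwise

variable {n r : ℕ}

lemma expToZ_injective : Function.Injective (expToZ (n := n)) := by
  intro d e h
  ext j
  have := congrFun h j
  simpa [expToZ] using this

lemma natExp_apply (s : Fin n → ℤ) (j : Fin n) : natExp s j = (s j).toNat := rfl

lemma expToZ_natExp {s : Fin n → ℤ} (hs : ∀ j, 0 ≤ s j) : expToZ (natExp s) = s := by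
  funext j
  simp [expToZ, natExp_apply, Int.toNat_of_nonneg (hs j)]

lemma expToZ_apply (d : Fin n →₀ ℕ) (j : Fin n) : expToZ d j = (d j : ℤ) := rfl

/-- Nonnegative integer combinations of the generators. -/
def psi (b : Fin r → Fin n → ℤ) (c : Fin r → ℕ) : Fin n → ℤ := ∑ i, c i • b i

lemma psi_apply (b : Fin r → Fin n → ℤ) (c : Fin r → ℕ) (j : Fin n) :
    psi b c j = ∑ i, (c i : ℤ) * b i j := by
  simp [psi, Finset.sum_apply]

lemma psi_mem (b : Fin r → Fin n → ℤ) (c : Fin r → ℕ) : psi b c ∈ Sgroup b :=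
  sum_mem fun i _ =>
    nsmul_mem (AddSubmonoid.subset_closure (Set.mem_range_self i)) (c i)

lemma mem_Sgroup_iff {b : Fin r → Fin n → ℤ} {s : Fin n → ℤ} :
    s ∈ Sgroup b ↔ ∃ c : Fin r → ℕ, s = psi b c := by
  constructor
  · intro hs
    let T : AddSubmonoid (Fin n → ℤ) :=
      { carrier := {s | ∃ c : Fin r → ℕ, s = psi b c}
        zero_mem' := ⟨0, by simp [psi]⟩
        add_mem' := by
          rintro x y ⟨c, rfl⟩ ⟨c', rfl⟩
          refine ⟨c + c', ?_⟩
          simp [psi, add_smul, Finset.sum_add_distrib]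
      }
    have hle : Sgroup b ≤ T := by
      apply AddSubmonoid.closure_le.mpr
      rintro x ⟨i, rfl⟩
      refine ⟨Pi.single i 1, ?_⟩
      funext j
      rw [psi_apply]
      simp [Pi.single_apply]
    exact hle hs
  · rintro ⟨c, rfl⟩
    exact psi_mem b c

lemma Sgroup_nonneg {b : Fin r → Fin n → ℤ} (hbnn : ∀ i j, 0 ≤ b i j) {s : Fin n → ℤ}
    (hs : s ∈ Sgroup b) (j : Fin n) : 0 ≤ s j := by
  obtain ⟨c, rfl⟩ := mem_Sgroup_iff.mp hs
  rw [psi_apply]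
  exact Finset.sum_nonneg fun i _ => mul_nonneg (Int.natCast_nonneg _) (hbnn i j)

/-- The pairing of a real covector with an integer point. -/
def dotv (v : Fin n → ℝ) (s : Fin n → ℤ) : ℝ := ∑ j, v j * (s j : ℝ)

lemma dotv_add (v : Fin n → ℝ) (s t : Fin n → ℤ) :
    dotv v (s + t) = dotv v s + dotv v t := by
  simp [dotv, mul_add, Finset.sum_add_distrib]

lemma dotv_zero (v : Fin n → ℝ) : dotv v (0 : Fin n → ℤ) = 0 := by simp [dotv]

lemma dotv_psi {b : Fin r → Fin n → ℤ} (v : Fin n → ℝ) (c : Fin r → ℕ) :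
    dotv v (psi b c) = ∑ i, (c i : ℝ) * dotv v (b i) := by
  show (∑ j, v j * ((psi b c) j : ℝ)) = _
  calc (∑ j, v j * ((psi b c) j : ℝ))
      = ∑ j, ∑ i, (c i : ℝ) * (v j * (b i j : ℝ)) := by
        refine Finset.sum_congr rfl fun j _ => ?_
        rw [psi_apply]
        push_cast
        rw [Finset.mul_sum]
        exact Finset.sum_congr rfl fun i _ => by ring
    _ = ∑ i, ∑ j, (c i : ℝ) * (v j * (b i j : ℝ)) := Finset.sum_comm
    _ = ∑ i, (c i : ℝ) * dotv v (b i) := by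
        refine Finset.sum_congr rfl fun i _ => ?_
        rw [dotv, Finset.mul_sum]

lemma dotv_nonneg {b : Fin r → Fin n → ℤ} {v : Fin n → ℝ}
    (hv0 : ∀ i, 0 ≤ dotv v (b i)) {s : Fin n → ℤ} (hs : s ∈ Sgroup b) : 0 ≤ dotv v s := by
  obtain ⟨c, rfl⟩ := mem_Sgroup_iff.mp hs
  rw [dotv_psi]
  exact Finset.sum_nonneg fun i _ => mul_nonneg (Nat.cast_nonneg _) (hv0 i)

lemma mem_RS_iff {b : Fin r → Fin n → ℤ} {f : MvPowerSeries (Fin n) ℂ} :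
    f ∈ RS b ↔ ∀ d, MvPowerSeries.coeff d f ≠ 0 → expToZ d ∈ Sgroup b := Iff.rfl

/-- Finiteness of sublevel sets of the monoid for a covector positive on generators. -/
lemma finite_le {b : Fin r → Fin n → ℤ} (hbnn : ∀ i j, 0 ≤ b i j) (hr : 0 < r)
    {v : Fin n → ℝ} (hv : ∀ i, 0 < dotv v (b i)) (B : ℝ) :
    {s : Fin n → ℤ | s ∈ Sgroup b ∧ dotv v s ≤ B}.Finite := by
  have hne : (Finset.univ : Finset (Fin r)).Nonempty := ⟨⟨0, hr⟩, Finset.mem_univ _⟩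
  set δ : ℝ := Finset.univ.inf' hne (fun i => dotv v (b i)) with hδdef
  have hδpos : 0 < δ := by
    rw [hδdef, Finset.lt_inf'_iff]
    exact fun i _ => hv i
  have hδle : ∀ i, δ ≤ dotv v (b i) := fun i => Finset.inf'_le _ (Finset.mem_univ i)
  set C : ℝ := ∑ i, ∑ j, ((b i j : ℝ)) with hCdef
  have hC0 : 0 ≤ C :=
    Finset.sum_nonneg fun i _ => Finset.sum_nonneg fun j _ => by exact_mod_cast hbnn i j
  have hCij : ∀ i j, (b i j : ℝ) ≤ C := by
    intro i j
    calc (b i j : ℝ) ≤ ∑ j', (b i j' : ℝ) :=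
          Finset.single_le_sum (f := fun j' => ((b i j' : ℤ) : ℝ))
            (fun j' _ => by exact_mod_cast hbnn i j') (Finset.mem_univ j)
      _ ≤ C := Finset.single_le_sum (f := fun i' => ∑ j', ((b i' j' : ℤ) : ℝ))
          (fun i' _ => Finset.sum_nonneg fun j' _ => by exact_mod_cast hbnn i' j')
          (Finset.mem_univ i)
  set M : ℤ := ⌈B / δ * C⌉ with hMdef
  apply Set.Finite.subset (Set.Finite.pi (fun j : Fin n => Set.finite_Icc (0 : ℤ) M))
  rintro s ⟨hs, hsB⟩
  obtain ⟨c, rfl⟩ := mem_Sgroup_iff.mp hs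
  have hsum : (∑ i, (c i : ℝ)) ≤ B / δ := by
    rw [le_div_iff₀ hδpos]
    calc (∑ i, (c i : ℝ)) * δ = ∑ i, (c i : ℝ) * δ := by rw [Finset.sum_mul]
      _ ≤ ∑ i, (c i : ℝ) * dotv v (b i) :=
          Finset.sum_le_sum fun i _ => mul_le_mul_of_nonneg_left (hδle i) (Nat.cast_nonneg _)
      _ = dotv v (psi b c) := (dotv_psi v c).symm
      _ ≤ B := hsB
  intro j _
  have hnn : (0 : ℤ) ≤ psi b c j := Sgroup_nonneg hbnn (psi_mem b c) j
  have hub : ((psi b c j : ℤ) : ℝ) ≤ B / δ * C := by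
    rw [psi_apply]
    push_cast
    calc (∑ i, (c i : ℝ) * (b i j : ℝ)) ≤ ∑ i, (c i : ℝ) * C :=
          Finset.sum_le_sum fun i _ =>
            mul_le_mul_of_nonneg_left (hCij i j) (Nat.cast_nonneg _)
      _ = (∑ i, (c i : ℝ)) * C := by rw [Finset.sum_mul]
      _ ≤ B / δ * C := by
          apply mul_le_mul_of_nonneg_right hsum hC0
  refine Set.mem_Icc.mpr ⟨hnn, ?_⟩
  have := hub.trans (Int.le_ceil _)
  exact_mod_cast this

/-- A nonzero series with support in `S` has a minimal weight support point. -/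
lemma exists_min_supp {b : Fin r → Fin n → ℤ} (hbnn : ∀ i j, 0 ≤ b i j) (hr : 0 < r)
    {v : Fin n → ℝ} (hv : ∀ i, 0 < dotv v (b i)) {f : MvPowerSeries (Fin n) ℂ}
    (hf : ∀ d, MvPowerSeries.coeff d f ≠ 0 → expToZ d ∈ Sgroup b) (hfne : f ≠ 0) :
    ∃ W : ℝ, 0 ≤ W ∧ (∃ d, MvPowerSeries.coeff d f ≠ 0 ∧ dotv v (expToZ d) = W) ∧
      ∀ d, MvPowerSeries.coeff d f ≠ 0 → W ≤ dotv v (expToZ d) := by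
  have : ∃ d₁, MvPowerSeries.coeff d₁ f ≠ 0 := by
    by_contra hcon
    push_neg at hcon
    exact hfne (MvPowerSeries.ext fun d => by simpa using hcon d)
  obtain ⟨d₁, hd₁⟩ := this
  set B := dotv v (expToZ d₁) with hBdef
  set T : Set (Fin n → ℤ) :=
    {s | (∃ d, MvPowerSeries.coeff d f ≠ 0 ∧ s = expToZ d) ∧ dotv v s ≤ B} with hTdef
  have hTfin : T.Finite := by
    apply Set.Finite.subset (finite_le hbnn hr hv B)
    rintro s ⟨⟨d, hd, rfl⟩, hsB⟩
    exact ⟨hf d hd, hsB⟩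
  have hTne : T.Nonempty := ⟨expToZ d₁, ⟨d₁, hd₁, rfl⟩, le_refl _⟩
  obtain ⟨s₀, hs₀T, hs₀min⟩ := Set.exists_min_image T (dotv v) hTfin hTne
  obtain ⟨⟨d₀, hd₀, hs₀⟩, hs₀B⟩ := hs₀T
  refine ⟨dotv v s₀, ?_, ⟨d₀, hd₀, by rw [hs₀]⟩, ?_⟩
  · exact dotv_nonneg (fun i => (hv i).le) (hs₀ ▸ hf d₀ hd₀)
  · intro d hd
    by_cases hcase : dotv v (expToZ d) ≤ B
    · exact hs₀min _ ⟨⟨d, hd, rfl⟩, hcase⟩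
    · push_neg at hcase
      calc dotv v s₀ ≤ B := hs₀B
        _ ≤ dotv v (expToZ d) := hcase.le

/-- Support points of a product have weight bounded below by the sum of the bounds. -/
lemma mul_bound {v : Fin n → ℝ} {f g : MvPowerSeries (Fin n) ℂ} {α β : ℝ}
    (hfb : ∀ d, MvPowerSeries.coeff d f ≠ 0 → α ≤ dotv v (expToZ d))
    (hgb : ∀ d, MvPowerSeries.coeff d g ≠ 0 → β ≤ dotv v (expToZ d)) :
    ∀ d, MvPowerSeries.coeff d (f * g) ≠ 0 → α + β ≤ dotv v (expToZ d) := by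
  classical
  intro d hd
  rw [MvPowerSeries.coeff_mul] at hd
  obtain ⟨p, hp, hne⟩ := Finset.exists_ne_zero_of_sum_ne_zero hd
  rw [Finset.HasAntidiagonal.mem_antidiagonal] at hp
  have h1 := hfb _ (left_ne_zero_of_mul hne)
  have h2 := hgb _ (right_ne_zero_of_mul hne)
  have : expToZ d = expToZ p.1 + expToZ p.2 := by rw [← expToZ_add, hp]
  rw [this, dotv_add]
  exact add_le_add h1 h2

/-- Strict multiplicativity of the minimal weight (via initial polynomials). -/
lemma mul_min {b : Fin r → Fin n → ℤ} (hbnn : ∀ i j, 0 ≤ b i j) (hr : 0 < r)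
    {v : Fin n → ℝ} (hv : ∀ i, 0 < dotv v (b i)) {f g : MvPowerSeries (Fin n) ℂ}
    (hf : ∀ d, MvPowerSeries.coeff d f ≠ 0 → expToZ d ∈ Sgroup b)
    (hg : ∀ d, MvPowerSeries.coeff d g ≠ 0 → expToZ d ∈ Sgroup b) {Wf Wg : ℝ}
    (hfW : ∃ d, MvPowerSeries.coeff d f ≠ 0 ∧ dotv v (expToZ d) = Wf)
    (hfb : ∀ d, MvPowerSeries.coeff d f ≠ 0 → Wf ≤ dotv v (expToZ d))
    (hgW : ∃ d, MvPowerSeries.coeff d g ≠ 0 ∧ dotv v (expToZ d) = Wg)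
    (hgb : ∀ d, MvPowerSeries.coeff d g ≠ 0 → Wg ≤ dotv v (expToZ d)) :
    ∃ d, MvPowerSeries.coeff d (f * g) ≠ 0 ∧ dotv v (expToZ d) = Wf + Wg := by
  classical
  -- the "initial" exponent sets
  set Df : Set (Fin n →₀ ℕ) :=
    {d | MvPowerSeries.coeff d f ≠ 0 ∧ dotv v (expToZ d) = Wf} with hDfdef
  set Dg : Set (Fin n →₀ ℕ) :=
    {d | MvPowerSeries.coeff d g ≠ 0 ∧ dotv v (expToZ d) = Wg} with hDgdef
  have hDffin : Df.Finite := by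
    have : Df ⊆ expToZ ⁻¹' {s : Fin n → ℤ | s ∈ Sgroup b ∧ dotv v s ≤ Wf} := by
      rintro d ⟨hd1, hd2⟩
      exact ⟨hf d hd1, le_of_eq hd2⟩
    exact Set.Finite.subset ((finite_le hbnn hr hv Wf).preimage
      (Set.injOn_of_injective expToZ_injective)) this
  have hDgfin : Dg.Finite := by
    have : Dg ⊆ expToZ ⁻¹' {s : Fin n → ℤ | s ∈ Sgroup b ∧ dotv v s ≤ Wg} := by
      rintro d ⟨hd1, hd2⟩
      exact ⟨hg d hd1, le_of_eq hd2⟩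
    exact Set.Finite.subset ((finite_le hbnn hr hv Wg).preimage
      (Set.injOn_of_injective expToZ_injective)) this
  set pf : MvPolynomial (Fin n) ℂ :=
    ∑ d ∈ hDffin.toFinset, MvPolynomial.monomial d (MvPowerSeries.coeff d f) with hpfdef
  set pg : MvPolynomial (Fin n) ℂ :=
    ∑ d ∈ hDgfin.toFinset, MvPolynomial.monomial d (MvPowerSeries.coeff d g) with hpgdef
  have coeff_pf : ∀ e, MvPolynomial.coeff e pf =
      if e ∈ hDffin.toFinset then MvPowerSeries.coeff e f else 0 := by
    intro e
    rw [hpfdef, MvPolynomial.coeff_sum]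
    rw [Finset.sum_congr rfl (fun d _ => MvPolynomial.coeff_monomial e d _)]
    exact Finset.sum_ite_eq' _ _ _
  have coeff_pg : ∀ e, MvPolynomial.coeff e pg =
      if e ∈ hDgfin.toFinset then MvPowerSeries.coeff e g else 0 := by
    intro e
    rw [hpgdef, MvPolynomial.coeff_sum]
    rw [Finset.sum_congr rfl (fun d _ => MvPolynomial.coeff_monomial e d _)]
    exact Finset.sum_ite_eq' _ _ _
  obtain ⟨df, hdf, hdfW⟩ := hfW
  obtain ⟨dg, hdg, hdgW⟩ := hgW
  have hpfne : pf ≠ 0 := by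
    have : MvPolynomial.coeff df pf ≠ 0 := by
      rw [coeff_pf, if_pos (hDffin.mem_toFinset.mpr ⟨hdf, hdfW⟩)]
      exact hdf
    exact fun hcon => this (by rw [hcon, MvPolynomial.coeff_zero])
  have hpgne : pg ≠ 0 := by
    have : MvPolynomial.coeff dg pg ≠ 0 := by
      rw [coeff_pg, if_pos (hDgfin.mem_toFinset.mpr ⟨hdg, hdgW⟩)]
      exact hdg
    exact fun hcon => this (by rw [hcon, MvPolynomial.coeff_zero])
  have hprod : pf * pg ≠ 0 := mul_ne_zero hpfne hpgne
  obtain ⟨e, he⟩ := MvPolynomial.ne_zero_iff.mp hprod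
  -- the weight of `e` is exactly `Wf + Wg`
  have heW : dotv v (expToZ e) = Wf + Wg := by
    rw [MvPolynomial.coeff_mul] at he
    obtain ⟨p, hp, hne⟩ := Finset.exists_ne_zero_of_sum_ne_zero he
    rw [Finset.HasAntidiagonal.mem_antidiagonal] at hp
    have h1 : p.1 ∈ hDffin.toFinset := by
      by_contra hcon
      rw [coeff_pf, if_neg hcon] at hne
      exact hne (zero_mul _)
    have h2 : p.2 ∈ hDgfin.toFinset := by
      by_contra hcon
      rw [coeff_pg, if_neg hcon] at hne
      exact hne (mul_zero _)
    obtain ⟨-, hW1⟩ := hDffin.mem_toFinset.mp h1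
    obtain ⟨-, hW2⟩ := hDgfin.mem_toFinset.mp h2
    have : expToZ e = expToZ p.1 + expToZ p.2 := by rw [← expToZ_add, hp]
    rw [this, dotv_add, hW1, hW2]
  -- the coefficients of `f*g` and `pf*pg` agree at `e`
  have hcoeff : MvPowerSeries.coeff e (f * g) = MvPolynomial.coeff e (pf * pg) := by
    rw [MvPowerSeries.coeff_mul, MvPolynomial.coeff_mul]
    refine Finset.sum_congr rfl fun p hp => ?_
    rw [Finset.HasAntidiagonal.mem_antidiagonal] at hp
    by_cases h1 : p.1 ∈ hDffin.toFinset
    · by_cases h2 : p.2 ∈ hDgfin.toFinset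
      · rw [coeff_pf, coeff_pg, if_pos h1, if_pos h2]
      · -- second factor not initial: both sides vanish
        rw [coeff_pf, coeff_pg, if_pos h1, if_neg h2, mul_zero]
        by_cases hz1 : MvPowerSeries.coeff p.1 f = 0
        · rw [hz1, zero_mul]
        · by_cases hz2 : MvPowerSeries.coeff p.2 g = 0
          · rw [hz2, mul_zero]
          · exfalso
            apply h2
            rw [Set.Finite.mem_toFinset]
            refine ⟨hz2, ?_⟩
            obtain ⟨-, hW1⟩ := hDffin.mem_toFinset.mp h1
            have hsum : dotv v (expToZ p.1) + dotv v (expToZ p.2) = Wf + Wg := by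
              rw [← dotv_add, ← expToZ_add, hp, heW]
            have := hgb _ hz2
            linarith [hfb _ hz1, hW1]
    · rw [coeff_pf, if_neg h1, zero_mul]
      by_cases hz1 : MvPowerSeries.coeff p.1 f = 0
      · rw [hz1, zero_mul]
      · by_cases hz2 : MvPowerSeries.coeff p.2 g = 0
        · rw [hz2, mul_zero]
        · exfalso
          apply h1
          rw [Set.Finite.mem_toFinset]
          refine ⟨hz1, ?_⟩
          have hsum : dotv v (expToZ p.1) + dotv v (expToZ p.2) = Wf + Wg := by
            rw [← dotv_add, ← expToZ_add, hp, heW]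
          have := hfb _ hz1
          linarith [hgb _ hz2]
  exact ⟨e, by rw [hcoeff]; exact he, heW⟩

/-- The minimal weight of a power. -/
lemma pow_min {b : Fin r → Fin n → ℤ} (hbnn : ∀ i j, 0 ≤ b i j) (hr : 0 < r)
    {v : Fin n → ℝ} (hv : ∀ i, 0 < dotv v (b i)) {f : MvPowerSeries (Fin n) ℂ}
    (hf : f ∈ RS b) {W : ℝ}
    (hfW : ∃ d, MvPowerSeries.coeff d f ≠ 0 ∧ dotv v (expToZ d) = W)
    (hfb : ∀ d, MvPowerSeries.coeff d f ≠ 0 → W ≤ dotv v (expToZ d)) :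
    ∀ m : ℕ, (∃ d, MvPowerSeries.coeff d (f ^ m) ≠ 0 ∧ dotv v (expToZ d) = m * W) ∧
      (∀ d, MvPowerSeries.coeff d (f ^ m) ≠ 0 → (m : ℝ) * W ≤ dotv v (expToZ d)) := by
  intro m
  induction m with
  | zero =>
    constructor
    · refine ⟨0, ?_, by rw [expToZ_zero, dotv_zero]; norm_num⟩
      rw [pow_zero]
      rw [MvPowerSeries.coeff_one]
      simp
    · intro d hd
      rw [pow_zero, MvPowerSeries.coeff_one] at hd
      have : d = 0 := by
        by_contra hcon
        rw [if_neg hcon] at hd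
        exact hd rfl
      rw [this, expToZ_zero, dotv_zero]
      norm_num
  | succ m ih =>
    have hfm : f ^ m ∈ RS b := pow_mem hf m
    have hfm1 : f ^ (m + 1) = f ^ m * f := pow_succ f m
    constructor
    · obtain ⟨d, hd, hdW⟩ := mul_min hbnn hr hv (mem_RS_iff.mp hfm) (mem_RS_iff.mp hf)
        ih.1 ih.2 hfW hfb
      refine ⟨d, ?_, ?_⟩
      · rw [hfm1]; exact hd
      · rw [hdW]; push_cast; ring
    · intro d hd
      rw [hfm1] at hd
      have := mul_bound ih.2 hfb d hd
      calc ((m + 1 : ℕ) : ℝ) * W = (m : ℝ) * W + W := by push_cast; ring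
        _ ≤ dotv v (expToZ d) := this

set_option synthInstance.maxHeartbeats 1000000 in
set_option maxHeartbeats 1000000 in
/-- Weight bound for elements of powers of an ideal. -/
lemma pow_ideal_bound {b : Fin r → Fin n → ℤ} {v : Fin n → ℝ} (I : Ideal ↥(RS b)) {c : ℝ}
    (hI : ∀ g : ↥(RS b), g ∈ I → ∀ d,
      MvPowerSeries.coeff d (g : MvPowerSeries (Fin n) ℂ) ≠ 0 → c ≤ dotv v (expToZ d)) :
    ∀ k : ℕ, ∀ x : ↥(RS b), x ∈ I ^ (k + 1) → ∀ d,
      MvPowerSeries.coeff d (x : MvPowerSeries (Fin n) ℂ) ≠ 0 →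
        ((k : ℝ) + 1) * c ≤ dotv v (expToZ d) := by
  intro k
  induction k with
  | zero =>
    intro x hx d hd
    rw [pow_one] at hx
    have := hI x hx d hd
    push_cast
    linarith
  | succ k ih =>
    intro x hx d hd
    rw [pow_succ] at hx
    revert hd
    revert d
    refine Submodule.mul_induction_on hx ?_ ?_
    · intro m hm g hg d hd
      have hcoe : ((m * g : ↥(RS b)) : MvPowerSeries (Fin n) ℂ) =
          (m : MvPowerSeries (Fin n) ℂ) * (g : MvPowerSeries (Fin n) ℂ) := rfl
      rw [hcoe] at hd
      have := mul_bound (fun d' hd' => ih m hm d' hd') (fun d' hd' => hI g hg d' hd') d hd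
      push_cast at this ⊢
      linarith
    · intro x y hx' hy' d hd
      have hcoe : ((x + y : ↥(RS b)) : MvPowerSeries (Fin n) ℂ) =
          (x : MvPowerSeries (Fin n) ℂ) + (y : MvPowerSeries (Fin n) ℂ) := rfl
      rw [hcoe, map_add] at hd
      by_cases hz : MvPowerSeries.coeff d (x : MvPowerSeries (Fin n) ℂ) ≠ 0
      · exact hx' d hz
      · push_neg at hz
        exact hy' d (by simpa [hz] using hd)

lemma toReal_add (s t : Fin n → ℤ) : toReal (s + t) = toReal s + toReal t := by
  funext j; simp [toReal]

lemma coneS_convex (b : Fin r → Fin n → ℤ) : Convex ℝ (coneS b) := by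
  rintro x ⟨lx, hlx, rfl⟩ y ⟨ly, hly, rfl⟩ a c ha hc _
  refine ⟨fun i => a * lx i + c * ly i,
    fun i => add_nonneg (mul_nonneg ha (hlx i)) (mul_nonneg hc (hly i)), ?_⟩
  rw [Finset.smul_sum, Finset.smul_sum, ← Finset.sum_add_distrib]
  refine Finset.sum_congr rfl fun i _ => ?_
  rw [add_smul, smul_smul, smul_smul]

lemma coneS_nonneg {b : Fin r → Fin n → ℤ} (hbnn : ∀ i j, 0 ≤ b i j) {x : Fin n → ℝ}
    (hx : x ∈ coneS b) (j : Fin n) : 0 ≤ x j := by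
  obtain ⟨lam, hlam, rfl⟩ := hx
  rw [Finset.sum_apply]
  refine Finset.sum_nonneg fun i _ => ?_
  have : (0 : ℝ) ≤ toReal (b i) j := by
    show (0:ℝ) ≤ (b i j : ℝ)
    exact_mod_cast hbnn i j
  simpa using mul_nonneg (hlam i) this

lemma coneS_add_mem (b : Fin r → Fin n → ℤ) {x y : Fin n → ℝ} (hx : x ∈ coneS b)
    (hy : y ∈ coneS b) : x + y ∈ coneS b := by
  obtain ⟨lx, hlx, rfl⟩ := hx
  obtain ⟨ly, hly, rfl⟩ := hy
  refine ⟨fun i => lx i + ly i, fun i => add_nonneg (hlx i) (hly i), ?_⟩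
  rw [← Finset.sum_add_distrib]
  exact Finset.sum_congr rfl fun i _ => (add_smul _ _ _).symm

lemma toReal_mem_coneS {b : Fin r → Fin n → ℤ} {s : Fin n → ℤ} (hs : s ∈ Sgroup b) :
    toReal s ∈ coneS b := by
  obtain ⟨c, rfl⟩ := mem_Sgroup_iff.mp hs
  refine ⟨fun i => (c i : ℝ), fun i => Nat.cast_nonneg _, ?_⟩
  funext j
  rw [Finset.sum_apply]
  show ((psi b c j : ℤ) : ℝ) = _
  rw [psi_apply]
  push_cast
  exact Finset.sum_congr rfl fun i _ => by simp [toReal]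

lemma closed_add_ray {D : Set (Fin n → ℝ)} (hD : IsClosed D)
    (hDnn : ∀ x ∈ D, ∀ j, 0 ≤ x j) {w : Fin n → ℝ} (hwnn : ∀ j, 0 ≤ w j)
    (hw : 0 < ∑ j, w j) : IsClosed (D + {y | ∃ t : ℝ, 0 ≤ t ∧ y = t • w}) := by
  apply IsSeqClosed.isClosed
  intro u x hu hux
  have hchoice : ∀ m : ℕ, ∃ dt : (Fin n → ℝ) × ℝ, dt.1 ∈ D ∧ 0 ≤ dt.2 ∧
      u m = dt.1 + dt.2 • w := by
    intro m
    obtain ⟨d, hd, y, ⟨t, ht, rfl⟩, hdy⟩ := Set.mem_add.mp (hu m)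
    exact ⟨(d, t), hd, ht, hdy.symm⟩
  choose dt hd ht hu' using hchoice
  set d : ℕ → (Fin n → ℝ) := fun m => (dt m).1 with hddef
  set t : ℕ → ℝ := fun m => (dt m).2 with htdef
  set e : (Fin n → ℝ) → ℝ := fun z => ∑ j, z j with he
  have hecont : Continuous e := continuous_finset_sum _ fun j _ => continuous_apply j
  have hbd : BddAbove (Set.range fun m => e (u m)) :=
    ((hecont.tendsto x).comp hux).bddAbove_range
  obtain ⟨M, hM⟩ := hbd
  have htle : ∀ m, t m ≤ M / (∑ j, w j) := by
    intro m
    rw [le_div_iff₀ hw]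
    have h1 : e (u m) ≤ M := hM (Set.mem_range_self m)
    have h2 : e (u m) = e (d m) + t m * ∑ j, w j := by
      rw [hu' m]
      simp only [he, Pi.add_apply, Pi.smul_apply, smul_eq_mul]
      rw [Finset.sum_add_distrib, Finset.mul_sum]
    have h3 : 0 ≤ e (d m) := Finset.sum_nonneg fun j _ => hDnn _ (hd m) j
    linarith
  obtain ⟨tinf, htinf, φ, hφ, hconv⟩ :=
    (isCompact_Icc (a := (0:ℝ)) (b := M / (∑ j, w j))).tendsto_subseq
      (x := t) (fun m => Set.mem_Icc.mpr ⟨ht m, htle m⟩)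
  have hdconv : Filter.Tendsto (fun m => d (φ m)) Filter.atTop (nhds (x - tinf • w)) := by
    have h1 : Filter.Tendsto (fun m => u (φ m)) Filter.atTop (nhds x) :=
      hux.comp (hφ.tendsto_atTop)
    have h2 : Filter.Tendsto (fun m => t (φ m) • w) Filter.atTop (nhds (tinf • w)) :=
      hconv.smul_const w
    have heq : (fun m => d (φ m)) = fun m => u (φ m) - t (φ m) • w := by
      funext m
      rw [hu' (φ m)]
      abel
    rw [heq]
    exact h1.sub h2
  have hxd : x - tinf • w ∈ D := hD.isSeqClosed (fun m => hd (φ m)) hdconv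
  exact Set.mem_add.mpr ⟨x - tinf • w, hxd, tinf • w, ⟨tinf, htinf.1, rfl⟩, by abel⟩

lemma sum_b_pos {b : Fin r → Fin n → ℤ} (hbne : ∀ i, b i ≠ 0) (hbnn : ∀ i j, 0 ≤ b i j)
    (i : Fin r) : 0 < ∑ j, toReal (b i) j := by
  obtain ⟨j, hj⟩ := Function.ne_iff.mp (hbne i)
  refine Finset.sum_pos' (fun j' _ => ?_) ⟨j, Finset.mem_univ j, ?_⟩
  · show (0:ℝ) ≤ (b i j' : ℝ); exact_mod_cast hbnn i j'
  · show (0:ℝ) < (b i j : ℝ)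
    have h1 : 0 ≤ b i j := hbnn i j
    have : 0 < b i j := lt_of_le_of_ne h1 (by simpa [eq_comm] using hj)
    exact_mod_cast this

lemma coneS_isClosed {b : Fin r → Fin n → ℤ} (hbne : ∀ i, b i ≠ 0)
    (hbnn : ∀ i j, 0 ≤ b i j) : IsClosed (coneS b) := by
  classical
  set Cpre : ℕ → Set (Fin n → ℝ) := fun k =>
    {x | ∃ lam : Fin r → ℝ, (∀ i, 0 ≤ lam i) ∧ (∀ i : Fin r, k ≤ (i : ℕ) → lam i = 0) ∧
      x = ∑ i, lam i • toReal (b i)} with hC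
  have horth : ∀ k, ∀ x ∈ Cpre k, ∀ j, 0 ≤ x j := by
    rintro k x ⟨lam, hlam, -, rfl⟩ j
    rw [Finset.sum_apply]
    refine Finset.sum_nonneg fun i _ => ?_
    have : (0 : ℝ) ≤ toReal (b i) j := by
      show (0:ℝ) ≤ (b i j : ℝ); exact_mod_cast hbnn i j
    simpa using mul_nonneg (hlam i) this
  have key : ∀ k, IsClosed (Cpre k) := by
    intro k
    induction k with
    | zero =>
      have h0 : Cpre 0 = {0} := by
        ext x
        constructor
        · rintro ⟨lam, -, hz, rfl⟩
          have : ∀ i, lam i = 0 := fun i => hz i (Nat.zero_le _)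
          simp only [Set.mem_singleton_iff]
          refine Finset.sum_eq_zero fun i _ => ?_
          rw [this i, zero_smul]
        · rintro rfl
          exact ⟨0, fun i => le_refl 0, fun i _ => rfl, by simp⟩
      rw [h0]
      exact isClosed_singleton
    | succ k ih =>
      by_cases hkr : k < r
      · set i0 : Fin r := ⟨k, hkr⟩ with hi0
        set w : Fin n → ℝ := toReal (b i0) with hwdef
        have hsplit : Cpre (k + 1) = Cpre k + {y | ∃ t : ℝ, 0 ≤ t ∧ y = t • w} := by
          ext x
          constructor
          · rintro ⟨lam, h1, h2, rfl⟩
            set lam' : Fin r → ℝ := Function.update lam i0 0 with hl'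
            refine Set.mem_add.mpr ⟨∑ i, lam' i • toReal (b i),
              ⟨lam', ?_, ?_, rfl⟩, lam i0 • w, ⟨lam i0, h1 i0, rfl⟩, ?_⟩
            · intro i
              by_cases hii : i = i0
              · rw [hii, hl', Function.update_self]
              · rw [hl', Function.update_of_ne hii]; exact h1 i
            · intro i hi
              by_cases hii : i = i0
              · rw [hii, hl', Function.update_self]
              · rw [hl', Function.update_of_ne hii]
                refine h2 i ?_
                have : (i : ℕ) ≠ k := fun hcon => hii (Fin.ext hcon)
                omega
            · rw [Finset.sum_eq_sum_sdiff_singleton_add (Finset.mem_univ i0)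
                (fun i => lam i • toReal (b i)),
                Finset.sum_eq_sum_sdiff_singleton_add (Finset.mem_univ i0)
                (fun i => lam' i • toReal (b i))]
              have hsame : ∀ i ∈ Finset.univ \ {i0}, lam' i • toReal (b i)
                  = lam i • toReal (b i) := by
                intro i hi
                rw [Finset.mem_sdiff, Finset.mem_singleton] at hi
                rw [hl', Function.update_of_ne hi.2]
              rw [Finset.sum_congr rfl hsame, hl', Function.update_self, zero_smul, add_zero]
          · intro hx
            obtain ⟨dd, ⟨lam, h1, h2, rfl⟩, y, ⟨tt, htt, rfl⟩, rfl⟩ := Set.mem_add.mp hx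
            set lam' : Fin r → ℝ := Function.update lam i0 tt with hl'
            refine ⟨lam', ?_, ?_, ?_⟩
            · intro i
              by_cases hii : i = i0
              · rw [hii, hl', Function.update_self]; exact htt
              · rw [hl', Function.update_of_ne hii]; exact h1 i
            · intro i hi
              have hii : i ≠ i0 := by
                intro hcon
                rw [hcon] at hi
                simp only [hi0] at hi
                omega
              rw [hl', Function.update_of_ne hii]
              refine h2 i ?_
              have : (i : ℕ) ≠ k := fun hcon => hii (Fin.ext hcon)
              omega
            · rw [Finset.sum_eq_sum_sdiff_singleton_add (Finset.mem_univ i0)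
                (fun i => lam' i • toReal (b i)),
                Finset.sum_eq_sum_sdiff_singleton_add (Finset.mem_univ i0)
                (fun i => lam i • toReal (b i))]
              have hsame : ∀ i ∈ Finset.univ \ {i0}, lam' i • toReal (b i)
                  = lam i • toReal (b i) := by
                intro i hi
                rw [Finset.mem_sdiff, Finset.mem_singleton] at hi
                rw [hl', Function.update_of_ne hi.2]
              rw [Finset.sum_congr rfl hsame, hl', Function.update_self,
                h2 i0 (le_refl k), zero_smul, add_zero]
        rw [hsplit]
        exact closed_add_ray ih (horth k) (fun j => by
          show (0:ℝ) ≤ (b i0 j : ℝ); exact_mod_cast hbnn i0 j)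
          (sum_b_pos hbne hbnn i0)
      · have heq : Cpre (k + 1) = Cpre k := by
          ext x
          constructor
          · rintro ⟨lam, h1, h2, rfl⟩
            refine ⟨lam, h1, fun i hi => ?_, rfl⟩
            exfalso; have := i.isLt; omega
          · rintro ⟨lam, h1, h2, rfl⟩
            refine ⟨lam, h1, fun i hi => ?_, rfl⟩
            exfalso; have := i.isLt; omega
        rw [heq]
        exact ih
  have hfin : coneS b = Cpre r := by
    ext x
    constructor
    · rintro ⟨lam, h1, rfl⟩
      exact ⟨lam, h1, fun i hi => by exfalso; have := i.isLt; omega, rfl⟩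
    · rintro ⟨lam, h1, -, rfl⟩
      exact ⟨lam, h1, rfl⟩
  rw [hfin]
  exact key r

/-- Dickson's lemma: every subset of `ℕ^N` has a finite subset of minorants. -/
lemma dickson_basis {N : ℕ} (A : Set (Fin N → ℕ)) :
    ∃ B : Finset (Fin N → ℕ), ↑B ⊆ A ∧ ∀ a ∈ A, ∃ m ∈ B, m ≤ a := by
  classical
  set Mn : Set (Fin N → ℕ) := {a ∈ A | ∀ x ∈ A, x ≤ a → x = a} with hMn
  have hminle : ∀ a ∈ A, ∃ m ∈ Mn, m ≤ a := by
    have H : ∀ W : ℕ, ∀ a ∈ A, (∑ i, a i) ≤ W → ∃ m ∈ Mn, m ≤ a := by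
      intro W
      induction W using Nat.strong_induction_on with
      | _ W ih =>
        intro a ha hW
        by_cases hmin : ∀ x ∈ A, x ≤ a → x = a
        · exact ⟨a, ⟨ha, hmin⟩, le_refl a⟩
        · push_neg at hmin
          obtain ⟨x, hxA, hxle, hxne⟩ := hmin
          have hlt : (∑ i, x i) < ∑ i, a i := by
            obtain ⟨j, hj⟩ := Function.ne_iff.mp hxne
            exact Finset.sum_lt_sum (fun i _ => hxle i)
              ⟨j, Finset.mem_univ j, lt_of_le_of_ne (hxle j) hj⟩
          obtain ⟨m, hm, hmle⟩ := ih (∑ i, x i) (lt_of_lt_of_le hlt hW) x hxA (le_refl _)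
          exact ⟨m, hm, le_trans hmle hxle⟩
    exact fun a ha => H (∑ i, a i) a ha (le_refl _)
  have hfin : Mn.Finite := by
    by_contra hinf
    have hinf' : Mn.Infinite := hinf
    set f := hinf'.natEmbedding with hf
    have hPWO : Set.IsPWO Mn :=
      Set.isPWO_of_wellQuasiOrderedLE Mn
    obtain ⟨m1, m2, hlt, hle⟩ := hPWO.exists_lt (f := fun k => (f k : Fin N → ℕ)) (fun k => (f k).2)
    have h2 := (f m2).2.2 _ (f m1).2.1 hle
    have : f m1 = f m2 := Subtype.ext h2
    exact absurd (f.injective this) (Nat.ne_of_lt hlt)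
  refine ⟨hfin.toFinset, ?_, ?_⟩
  · intro x hx
    rw [Set.Finite.coe_toFinset] at hx
    exact hx.1
  · intro a ha
    obtain ⟨m, hm, hle⟩ := hminle a ha
    exact ⟨m, hfin.mem_toFinset.mpr hm, hle⟩

lemma psi_split {b : Fin r → Fin n → ℤ} {mb c : Fin r → ℕ} (hle : mb ≤ c) :
    psi b mb + psi b (c - mb) = psi b c := by
  rw [psi, psi, psi, ← Finset.sum_add_distrib]
  refine Finset.sum_congr rfl fun i _ => ?_
  rw [← add_nsmul, Pi.sub_apply, Nat.add_sub_cancel' (hle i)]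

lemma split_exp {d : Fin n →₀ ℕ} {s t : Fin n → ℤ} (hs : ∀ j, 0 ≤ s j) (ht : ∀ j, 0 ≤ t j)
    (h : expToZ d = s + t) : d = natExp s + natExp t := by
  ext j
  have hj : (d j : ℤ) = s j + t j := by rw [← expToZ_apply, h]; rfl
  rw [Finsupp.add_apply, natExp_apply, natExp_apply]
  have h1 := hs j
  have h2 := ht j
  omega

lemma monomialZ_mem_RS {b : Fin r → Fin n → ℤ} (hbnn : ∀ i j, 0 ≤ b i j) {s : Fin n → ℤ}
    (hs : s ∈ Sgroup b) : monomialZ s ∈ RS b := by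
  intro d hd
  rw [monomialZ, MvPowerSeries.coeff_monomial] at hd
  split_ifs at hd with hcase
  · subst hcase
    rw [expToZ_natExp (fun j => Sgroup_nonneg hbnn hs j)]
    exact hs
  · exact absurd rfl hd

lemma dotv_neg (v : Fin n → ℝ) (s : Fin n → ℤ) : dotv (fun j => -(v j)) s = -(dotv v s) := by
  simp [dotv, Finset.sum_neg_distrib]

lemma dotv_shift (v : Fin n → ℝ) (ε : ℝ) (s : Fin n → ℤ) :
    dotv (fun j => v j + ε) s = dotv v s + ε * ∑ j, (s j : ℝ) := by
  simp [dotv, add_mul, Finset.sum_add_distrib, Finset.mul_sum]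

lemma clm_eq_dotv (f : (Fin n → ℝ) →L[ℝ] ℝ) (s : Fin n → ℤ) :
    f (toReal s) = dotv (fun j => f (Pi.single j 1)) s := by
  have hrep : toReal s = ∑ j, (s j : ℝ) • (Pi.single j 1 : Fin n → ℝ) := by
    funext j'
    rw [Finset.sum_apply]
    simp [toReal, Pi.single_apply]
  rw [hrep, map_sum]
  simp only [map_smul, smul_eq_mul]
  rw [dotv]
  exact Finset.sum_congr rfl fun j _ => mul_comm _ _

lemma smul_b_mem_coneS (b : Fin r → Fin n → ℤ) {t : ℝ} (ht : 0 ≤ t) (i : Fin r) :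
    t • toReal (b i) ∈ coneS b := by
  refine ⟨Pi.single i t, fun i' => ?_, ?_⟩
  · by_cases hii : i' = i
    · subst hii; rw [Pi.single_eq_same]; exact ht
    · rw [Pi.single_eq_of_ne hii]
  · rw [Finset.sum_eq_single i (fun i' _ hii => by rw [Pi.single_eq_of_ne hii, zero_smul])
      (fun hcon => absurd (Finset.mem_univ i) hcon)]
    rw [Pi.single_eq_same]

lemma zero_mem_coneS (b : Fin r → Fin n → ℤ) : (0 : Fin n → ℝ) ∈ coneS b :=
  ⟨0, fun i => le_refl 0, by simp⟩

set_option maxHeartbeats 2000000 in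
set_option synthInstance.maxHeartbeats 1000000 in
/-- The key step: every support point of an element integral over `I` lies in `Γ₊(I)`. -/
lemma supp_subset_newton {b : Fin r → Fin n → ℤ} (hr : 0 < r) (hbne : ∀ i, b i ≠ 0)
    (hbnn : ∀ i j, 0 ≤ b i j) (I : Ideal ↥(RS b)) {h : ↥(RS b)}
    (hint : IsIntegralOverIdeal I h) :
    ∀ d, MvPowerSeries.coeff d (h : MvPowerSeries (Fin n) ℂ) ≠ 0 →
      toReal (expToZ d) ∈ NewtonIdeal b I := by
  classical
  obtain ⟨m, hm, a, ha, heq⟩ := hint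
  -- the integral equation, coerced to power series
  have hM : (h : MvPowerSeries (Fin n) ℂ) ^ m +
      ∑ i : Fin m, (a i : MvPowerSeries (Fin n) ℂ) *
        (h : MvPowerSeries (Fin n) ℂ) ^ (m - 1 - (i : ℕ)) = 0 := by
    have := congrArg (Subalgebra.val (RS b)) heq
    simpa only [map_add, map_sum, map_mul, map_pow, map_zero, Subalgebra.val_apply] using this
  intro d hd
  by_contra hout
  have hhne : (h : MvPowerSeries (Fin n) ℂ) ≠ 0 := by
    intro hcon
    rw [hcon] at hd
    simp at hd
  by_cases hI0 : ∀ g : ↥(RS b), g ∈ I → g = 0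
  · -- trivial ideal: the equation forces `h ^ m = 0`, contradicting `h ≠ 0`
    have haz : ∀ i : Fin m, a i = 0 :=
      fun i => hI0 _ (Ideal.pow_le_self (Nat.succ_ne_zero _) (ha i))
    have hpow0 : (h : MvPowerSeries (Fin n) ℂ) ^ m = 0 := by
      have : ∀ i : Fin m, (a i : MvPowerSeries (Fin n) ℂ) = 0 := by
        intro i; rw [haz i]; rfl
      rw [← hM]
      simp [this]
    set v₁ : Fin n → ℝ := fun _ => 1 with hv₁
    have hv1 : ∀ i, 0 < dotv v₁ (b i) := by
      intro i
      have := sum_b_pos hbne hbnn i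
      simpa [dotv, toReal, hv₁] using this
    obtain ⟨W, hW0, hWex, hWb⟩ := exists_min_supp hbnn hr hv1 h.2 hhne
    obtain ⟨dstar, hdstar, -⟩ := (pow_min hbnn hr hv1 h.2 hWex hWb m).1
    rw [hpow0] at hdstar
    simp at hdstar
  · push_neg at hI0
    obtain ⟨g₀, hg₀I, hg₀ne⟩ := hI0
    have hg₀Mne : (g₀ : MvPowerSeries (Fin n) ℂ) ≠ 0 :=
      fun hcon => hg₀ne (Subtype.ext hcon)
    set Q : Set (Fin n → ℤ) :=
      ⋃ g ∈ (I : Set ↥(RS b)), suppZ (g : MvPowerSeries (Fin n) ℂ) with hQdef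
    have hQS : ∀ q ∈ Q, q ∈ Sgroup b := by
      intro q hq
      have hq' : q ∈ ⋃ g ∈ (I : Set ↥(RS b)), suppZ (g : MvPowerSeries (Fin n) ℂ) := hq
      obtain ⟨g, hg⟩ := Set.mem_iUnion.mp hq'
      obtain ⟨hgI, hq2⟩ := Set.mem_iUnion.mp hg
      obtain ⟨dq, hdq, rfl⟩ := hq2
      exact g.2 dq hdq
    -- Dickson basis for the support of the ideal
    set A : Set (Fin r → ℕ) := {c | psi b c ∈ Q} with hAdef
    obtain ⟨B, hBA, hBcov⟩ := dickson_basis A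
    set F : Finset (Fin n → ℤ) := B.image (psi b) with hFdef
    have hFQ : ∀ f ∈ F, f ∈ Q := by
      intro f hf
      rw [hFdef] at hf
      obtain ⟨mb, hmb, rfl⟩ := Finset.mem_image.mp hf
      exact hBA hmb
    have hQcov : ∀ q ∈ Q, ∃ f ∈ F, ∃ s, s ∈ Sgroup b ∧ q = f + s := by
      intro q hq
      obtain ⟨c, rfl⟩ := mem_Sgroup_iff.mp (hQS q hq)
      obtain ⟨mb, hmb, hle⟩ := hBcov c hq
      exact ⟨psi b mb, Finset.mem_image_of_mem _ hmb, psi b (c - mb),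
        psi_mem b _, (psi_split hle).symm⟩
    have hFne : F.Nonempty := by
      obtain ⟨dq, hdq⟩ : ∃ dq, MvPowerSeries.coeff dq (g₀ : MvPowerSeries (Fin n) ℂ) ≠ 0 := by
        by_contra hcon
        push_neg at hcon
        exact hg₀Mne (MvPowerSeries.ext fun e => by simpa using hcon e)
      have hq : expToZ dq ∈ Q :=
        Set.mem_biUnion hg₀I ⟨dq, hdq, rfl⟩
      obtain ⟨f, hf, -⟩ := hQcov _ hq
      exact ⟨f, hf⟩
    -- the Newton polyhedron is a closed convex set
    set P : Set (Fin n → ℝ) :=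
      convexHull ℝ (toReal '' (F : Set (Fin n → ℤ))) + coneS b with hPdef
    have hPclosed : IsClosed P :=
      IsClosed.add_left_of_isCompact (coneS_isClosed hbne hbnn)
        (((F : Set (Fin n → ℤ)).toFinite.image toReal).isCompact_convexHull ℝ)
    have hPconvex : Convex ℝ P := (convex_convexHull ℝ _).add (coneS_convex b)
    have hNP : NewtonIdeal b I = P := by
      apply le_antisymm
      · apply convexHull_min _ hPconvex
        rintro x ⟨k, hk, w, hw, rfl⟩
        obtain ⟨f, hf, s, hsS, rfl⟩ := hQcov k hk
        rw [toReal_add, add_assoc]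
        exact Set.add_mem_add
          (subset_convexHull ℝ _ (Set.mem_image_of_mem _ (by exact_mod_cast hf)))
          (coneS_add_mem b (toReal_mem_coneS hsS) hw)
      · rw [hPdef, ← (coneS_convex b).convexHull_eq, ← convexHull_add]
        apply convexHull_mono
        rintro x ⟨y, ⟨f, hf, rfl⟩, w, hw, rfl⟩
        exact ⟨f, hFQ f (by exact_mod_cast hf), w, hw, rfl⟩
    rw [hNP] at hout
    -- separation
    obtain ⟨lf, u, hlf, hup⟩ := geometric_hahn_banach_closed_point hPconvex hPclosed hout
    set v₀ : Fin n → ℝ := fun j => -(lf (Pi.single j 1)) with hv₀def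
    have hdv₀ : ∀ s : Fin n → ℤ, dotv v₀ s = -(lf (toReal s)) := by
      intro s
      rw [hv₀def]
      rw [show (fun j => -(lf (Pi.single j 1))) = fun j => -((fun j' => lf (Pi.single j' 1)) j)
        from rfl, dotv_neg, clm_eq_dotv]
    -- the functional is nonnegative on the generators of the cone
    have hb0 : ∀ i, 0 ≤ dotv v₀ (b i) := by
      intro i
      by_contra hneg
      push_neg at hneg
      rw [hdv₀] at hneg
      have hfBi : 0 < lf (toReal (b i)) := by linarith
      obtain ⟨f₀, hf₀⟩ := hFne
      have hf₀P : toReal f₀ ∈ P := by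
        have := Set.add_mem_add
          (subset_convexHull ℝ (toReal '' (F : Set (Fin n → ℤ)))
            (Set.mem_image_of_mem _ (by exact_mod_cast hf₀)))
          (zero_mem_coneS b)
        rwa [add_zero] at this
      set t : ℝ := (u - lf (toReal f₀)) / lf (toReal (b i)) with htdef
      have ht0 : 0 ≤ t := le_of_lt (div_pos (by linarith [hlf _ hf₀P]) hfBi)
      have hmem : toReal f₀ + t • toReal (b i) ∈ P := by
        obtain ⟨y, hy, w, hw, hyw⟩ := Set.mem_add.mp hf₀P
        exact Set.mem_add.mpr ⟨y, hy, w + t • toReal (b i),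
          coneS_add_mem b hw (smul_b_mem_coneS b ht0 i), by rw [← hyw]; abel⟩
      have := hlf _ hmem
      rw [map_add, map_smul, smul_eq_mul, htdef, div_mul_cancel₀ _ (ne_of_gt hfBi)] at this
      linarith
    have hFu : ∀ fq ∈ F, -u < dotv v₀ fq := by
      intro fq hfq
      have hfqP : toReal fq ∈ P := by
        have := Set.add_mem_add
          (subset_convexHull ℝ (toReal '' (F : Set (Fin n → ℤ)))
            (Set.mem_image_of_mem _ (by exact_mod_cast hfq)))
          (zero_mem_coneS b)
        rwa [add_zero] at this
      rw [hdv₀]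
      have := hlf _ hfqP
      linarith
    have hpu : dotv v₀ (expToZ d) < -u := by
      rw [hdv₀]
      linarith
    -- perturbation to make the functional strictly positive on the generators
    set Ssum : (Fin n → ℤ) → ℝ := fun s => ∑ j, (s j : ℝ) with hSsumdef
    set δ₀ : ℝ := -u - dotv v₀ (expToZ d) with hδ₀def
    have hδ₀pos : 0 < δ₀ := by rw [hδ₀def]; linarith
    set M' : ℝ := max 0 (F.sup' hFne fun fq => Ssum (expToZ d) - Ssum fq) with hM'def
    have hM'0 : 0 ≤ M' := le_max_left _ _
    set ε : ℝ := δ₀ / (1 + M') with hεdef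
    have hεpos : 0 < ε := div_pos hδ₀pos (by linarith)
    have hεM : ε * M' < δ₀ := by
      have h1 : ε * (1 + M') = δ₀ := div_mul_cancel₀ _ (by linarith)
      nlinarith
    set v : Fin n → ℝ := fun j => v₀ j + ε with hvdef
    have hdv : ∀ s : Fin n → ℤ, dotv v s = dotv v₀ s + ε * Ssum s := fun s => dotv_shift v₀ ε s
    have hvb : ∀ i, 0 < dotv v (b i) := by
      intro i
      rw [hdv]
      have h1 : 0 < Ssum (b i) := by
        have := sum_b_pos hbne hbnn i
        simpa [hSsumdef, toReal] using this
      have := hb0 i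
      nlinarith
    have hvF : ∀ fq ∈ F, dotv v (expToZ d) < dotv v fq := by
      intro fq hfq
      rw [hdv, hdv]
      have h1 : Ssum (expToZ d) - Ssum fq ≤ M' :=
        le_trans (Finset.le_sup' (fun fq => Ssum (expToZ d) - Ssum fq) hfq) (le_max_right _ _)
      have h2 := hFu fq hfq
      have h3 : ε * (Ssum (expToZ d) - Ssum fq) ≤ ε * M' :=
        mul_le_mul_of_nonneg_left h1 hεpos.le
      rw [hδ₀def] at hεM
      nlinarith
    -- the valuation argument
    obtain ⟨W, hW0, hWex, hWb⟩ := exists_min_supp hbnn hr hvb h.2 hhne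
    have hWp : W ≤ dotv v (expToZ d) := hWb d hd
    set c : ℝ := F.inf' hFne fun fq => dotv v fq with hcdef
    have hcW : W < c := by
      rw [hcdef, Finset.lt_inf'_iff]
      intro fq hfq
      exact lt_of_le_of_lt hWp (hvF fq hfq)
    have hIc : ∀ g : ↥(RS b), g ∈ I → ∀ d',
        MvPowerSeries.coeff d' (g : MvPowerSeries (Fin n) ℂ) ≠ 0 →
          c ≤ dotv v (expToZ d') := by
      intro g hg d' hd'
      have hq : expToZ d' ∈ Q :=
        Set.mem_biUnion hg ⟨d', hd', rfl⟩
      obtain ⟨fq, hfq, s, hsS, hqeq⟩ := hQcov _ hq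
      rw [hqeq, dotv_add]
      have h1 : c ≤ dotv v fq := Finset.inf'_le _ hfq
      have h2 : 0 ≤ dotv v s := dotv_nonneg (fun i => (hvb i).le) hsS
      linarith
    -- every support point of the right-hand side has weight `> m * W`
    have hrhs : ∀ d', MvPowerSeries.coeff d'
        (∑ i : Fin m, (a i : MvPowerSeries (Fin n) ℂ) *
          (h : MvPowerSeries (Fin n) ℂ) ^ (m - 1 - (i : ℕ))) ≠ 0 →
        (m : ℝ) * W < dotv v (expToZ d') := by
      intro d' hd'
      rw [map_sum] at hd'
      obtain ⟨i, -, hine⟩ := Finset.exists_ne_zero_of_sum_ne_zero hd'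
      have hai : ∀ e, MvPowerSeries.coeff e (a i : MvPowerSeries (Fin n) ℂ) ≠ 0 →
          (((i : ℕ) : ℝ) + 1) * c ≤ dotv v (expToZ e) :=
        pow_ideal_bound I hIc (i : ℕ) (a i) (ha i)
      have hpow : ∀ e, MvPowerSeries.coeff e
          ((h : MvPowerSeries (Fin n) ℂ) ^ (m - 1 - (i : ℕ))) ≠ 0 →
          ((m - 1 - (i : ℕ) : ℕ) : ℝ) * W ≤ dotv v (expToZ e) :=
        (pow_min hbnn hr hvb h.2 hWex hWb (m - 1 - (i : ℕ))).2
      have hb := mul_bound hai hpow d' hine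
      have hnat : (i : ℕ) + 1 + (m - 1 - (i : ℕ)) = m := by
        have := i.isLt
        omega
      have hcast : (((i : ℕ) : ℝ) + 1) + ((m - 1 - (i : ℕ) : ℕ) : ℝ) = (m : ℝ) := by
        have h' := congrArg (fun k : ℕ => (k : ℝ)) hnat
        push_cast at h'
        linarith
      have hmul : (((i : ℕ) : ℝ) + 1) * W < (((i : ℕ) : ℝ) + 1) * c :=
        mul_lt_mul_of_pos_left hcW (by positivity)
      nlinarith
    obtain ⟨dstar, hdstar, hdstarW⟩ := (pow_min hbnn hr hvb h.2 hWex hWb m).1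
    have hzero : MvPowerSeries.coeff dstar
        (∑ i : Fin m, (a i : MvPowerSeries (Fin n) ℂ) *
          (h : MvPowerSeries (Fin n) ℂ) ^ (m - 1 - (i : ℕ))) ≠ 0 := by
      have hsum : (∑ i : Fin m, (a i : MvPowerSeries (Fin n) ℂ) *
          (h : MvPowerSeries (Fin n) ℂ) ^ (m - 1 - (i : ℕ)))
          = -((h : MvPowerSeries (Fin n) ℂ) ^ m) := by
        rw [eq_neg_iff_add_eq_zero, add_comm]
        exact hM
      rw [hsum, map_neg]
      exact neg_ne_zero.mpr hdstar
    have := hrhs dstar hzero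
    rw [hdstarW] at this
    exact lt_irrefl _ this

end Aux

/-- for every ideal `I` of `R_S`, `Ī ⊆ I°`. -/
theorem closure_subset_icirc
    (n r : ℕ) (hn : 1 ≤ n) (hr : 1 ≤ r) (b : Fin r → Fin n → ℤ)
    (hb_ne : ∀ i, b i ≠ 0) (hb_nonneg : ∀ i j, 0 ≤ b i j)
    (hb_gen : AddSubgroup.closure (Set.range b) = (⊤ : AddSubgroup (Fin n → ℤ)))
    (hdim : Submodule.span ℝ (coneS b) = (⊤ : Submodule ℝ (Fin n → ℝ)))
    (hstrict : ∀ x ∈ coneS b, -x ∈ coneS b → x = (0 : Fin n → ℝ))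
    (I : Ideal ↥(RS b)) (h : ↥(RS b)) (hint : IsIntegralOverIdeal I h) :
    h ∈ Icirc b I := by
  classical
  have hr0 : 0 < r := hr
  have hsupp := supp_subset_newton hr0 hb_ne hb_nonneg I hint
  by_cases hh0 : h = 0
  · rw [hh0]; exact Ideal.zero_mem _
  -- Dickson basis for the support of `h`
  set A2 : Set (Fin r → ℕ) := {c | toReal (psi b c) ∈ NewtonIdeal b I} with hA2def
  obtain ⟨B2, hB2A, hB2cov⟩ := dickson_basis A2
  have hch : ∀ d : Fin n →₀ ℕ, ∃ βs : (Fin r → ℕ) × (Fin n → ℤ),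
      MvPowerSeries.coeff d (h : MvPowerSeries (Fin n) ℂ) ≠ 0 →
        βs.1 ∈ B2 ∧ βs.2 ∈ Sgroup b ∧ expToZ d = psi b βs.1 + βs.2 := by
    intro d
    by_cases hd : MvPowerSeries.coeff d (h : MvPowerSeries (Fin n) ℂ) ≠ 0
    · have hdS : expToZ d ∈ Sgroup b := h.2 d hd
      obtain ⟨c, hc⟩ := mem_Sgroup_iff.mp hdS
      have hcA : c ∈ A2 := by
        show toReal (psi b c) ∈ NewtonIdeal b I
        rw [← hc]
        exact hsupp d hd
      obtain ⟨β, hβ, hle⟩ := hB2cov c hcA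
      exact ⟨(β, psi b (c - β)), fun _ => ⟨hβ, psi_mem b _, by rw [hc, ← psi_split hle]⟩⟩
    · exact ⟨(fun _ => 0, 0), fun hcon => absurd hcon hd⟩
  choose σ hσ using hch
  -- the component series
  set U : (Fin r → ℕ) → MvPowerSeries (Fin n) ℂ := fun β d' =>
    if MvPowerSeries.coeff (natExp (psi b β) + d') (h : MvPowerSeries (Fin n) ℂ) ≠ 0 ∧
        (σ (natExp (psi b β) + d')).1 = β ∧ (σ (natExp (psi b β) + d')).2 = expToZ d'
    then MvPowerSeries.coeff (natExp (psi b β) + d') (h : MvPowerSeries (Fin n) ℂ) else 0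
    with hUdef
  have hUcoeff : ∀ β d', MvPowerSeries.coeff d' (U β) =
      if MvPowerSeries.coeff (natExp (psi b β) + d') (h : MvPowerSeries (Fin n) ℂ) ≠ 0 ∧
        (σ (natExp (psi b β) + d')).1 = β ∧ (σ (natExp (psi b β) + d')).2 = expToZ d'
      then MvPowerSeries.coeff (natExp (psi b β) + d') (h : MvPowerSeries (Fin n) ℂ) else 0 :=
    fun β d' => rfl
  have hUmem : ∀ β, U β ∈ RS b := by
    intro β d' hd'
    rw [hUcoeff] at hd'
    split_ifs at hd' with hcond
    · obtain ⟨h1, h2, h3⟩ := hcond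
      rw [← h3]
      exact (hσ _ h1).2.1
    · exact absurd rfl hd'
  -- `h` decomposes as a finite combination of the monomials `x^{ψ(β)}`
  have hdecomp : (h : MvPowerSeries (Fin n) ℂ) =
      ∑ β ∈ B2, monomialZ (psi b β) * U β := by
    apply MvPowerSeries.ext
    intro d
    rw [map_sum]
    have hterm : ∀ β, MvPowerSeries.coeff d (monomialZ (psi b β) * U β) =
        if natExp (psi b β) ≤ d then MvPowerSeries.coeff (d - natExp (psi b β)) (U β)
        else 0 := by
      intro β
      rw [monomialZ, MvPowerSeries.coeff_monomial_mul]
      split_ifs <;> simp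
    by_cases hd : MvPowerSeries.coeff d (h : MvPowerSeries (Fin n) ℂ) ≠ 0
    · obtain ⟨hβB, hsS, hsplit⟩ := hσ d hd
      have hψnn : ∀ j, 0 ≤ psi b (σ d).1 j := Sgroup_nonneg hb_nonneg (psi_mem b _)
      have hs0nn : ∀ j, 0 ≤ (σ d).2 j := Sgroup_nonneg hb_nonneg hsS
      have hdsplit : d = natExp (psi b (σ d).1) + natExp (σ d).2 :=
        split_exp hψnn hs0nn hsplit
      have hzero : ∀ β ∈ B2, β ≠ (σ d).1 →
          MvPowerSeries.coeff d (monomialZ (psi b β) * U β) = 0 := by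
        intro β hβ hne
        rw [hterm]
        split_ifs with hle
        · rw [hUcoeff, if_neg]
          rintro ⟨h1, h2, h3⟩
          rw [add_tsub_cancel_of_le hle] at h2
          exact hne h2.symm
        · rfl
      rw [Finset.sum_eq_single_of_mem (σ d).1 hβB hzero, hterm]
      have hdj := fun j => DFunLike.congr_fun hdsplit j
      have hle : natExp (psi b (σ d).1) ≤ d := by
        rw [Finsupp.le_def]
        intro j
        have := hdj j
        rw [Finsupp.add_apply] at this
        omega
      have hsub : d - natExp (psi b (σ d).1) = natExp (σ d).2 := by
        ext j
        rw [Finsupp.tsub_apply]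
        have := hdj j
        rw [Finsupp.add_apply] at this
        omega
      rw [if_pos hle, hsub, hUcoeff, ← hdsplit,
        if_pos ⟨hd, rfl, (expToZ_natExp hs0nn).symm⟩]
    · push_neg at hd
      rw [hd]
      symm
      apply Finset.sum_eq_zero
      intro β hβ
      rw [hterm]
      split_ifs with hle
      · rw [hUcoeff, if_neg]
        rintro ⟨h1, h2, h3⟩
        rw [add_tsub_cancel_of_le hle] at h1
        exact h1 hd
      · rfl
  -- lift the decomposition to `R_S` and conclude
  set Msub : (Fin r → ℕ) → ↥(RS b) := fun β =>
    ⟨monomialZ (psi b β), monomialZ_mem_RS hb_nonneg (psi_mem b β)⟩ with hMsubdef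
  set Usub : (Fin r → ℕ) → ↥(RS b) := fun β => ⟨U β, hUmem β⟩ with hUsubdef
  have hfinal : h = ∑ β ∈ B2, Msub β * Usub β := by
    apply Subtype.ext
    have hval : ((∑ β ∈ B2, Msub β * Usub β : ↥(RS b)) : MvPowerSeries (Fin n) ℂ)
        = ∑ β ∈ B2, monomialZ (psi b β) * U β := by
      rw [show ((∑ β ∈ B2, Msub β * Usub β : ↥(RS b)) : MvPowerSeries (Fin n) ℂ)
        = Subalgebra.val (RS b) (∑ β ∈ B2, Msub β * Usub β) from rfl]
      rw [map_sum (Subalgebra.val (RS b))]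
      rfl
    rw [hval]
    exact hdecomp
  rw [hfinal]
  apply Ideal.sum_mem
  intro β hβ
  refine Ideal.mul_mem_right (Usub β) _ (Ideal.subset_span ?_)
  exact ⟨psi b β, psi_mem b β, hB2A (Finset.mem_coe.mpr hβ), rfl⟩

end ToricNewton
end
end

section
/- Let I = ⟨g₁, …, g_l⟩ be the ideal of R_S generated by finitely many elements g₁, …, g_l. Then C(Ī) ⊆ Γ₊(I). -/
open scoped BigOperators

noncomputable section

namespace ToricNewton

set_option synthInstance.maxHeartbeats 800000

section Aux

variable {n r : ℕ} {b : Fin r → Fin n → ℤ}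

lemma sgroup_nonneg (hb : ∀ i j, 0 ≤ b i j) {s : Fin n → ℤ}
    (hs : s ∈ Sgroup b) : ∀ j, 0 ≤ s j := by
  induction hs using AddSubmonoid.closure_induction with
  | mem x hx => obtain ⟨i, rfl⟩ := hx; exact hb i
  | zero => intro j; simp
  | add x y _ _ hx hy => intro j; exact add_nonneg (hx j) (hy j)

lemma coneS_zero_mem : (0 : Fin n → ℝ) ∈ coneS b :=
  ⟨0, fun _ => le_refl 0, by simp⟩

lemma monomial_one_pow (D : Fin n →₀ ℕ) (j : ℕ) :
    (MvPowerSeries.monomial D (1 : ℂ)) ^ j = MvPowerSeries.monomial (j • D) 1 := by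
  induction j with
  | zero => simp [MvPowerSeries.monomial_zero_one]
  | succ k ih =>
    rw [pow_succ, ih, MvPowerSeries.monomial_mul_monomial, succ_nsmul, one_mul]

/-- Support decomposition for elements of `I^(k+1)`. -/
lemma supp_pow_decomp (I : Ideal ↥(RS b)) :
    ∀ (k : ℕ) (f : ↥(RS b)), f ∈ I ^ (k + 1) →
    ∀ d : Fin n →₀ ℕ, MvPowerSeries.coeff d (f : MvPowerSeries (Fin n) ℂ) ≠ 0 →
    ∃ e : Fin (k + 1) → (Fin n →₀ ℕ),
      (∀ j, expToZ (e j) ∈ ⋃ g ∈ (I : Set ↥(RS b)), suppZ (g : MvPowerSeries (Fin n) ℂ)) ∧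
      d = ∑ j, e j := by
  intro k
  induction k with
  | zero =>
    intro f hf d hd
    refine ⟨fun _ => d, ?_, by simp⟩
    intro j
    rw [pow_one] at hf
    exact Set.mem_biUnion hf ⟨d, hd, rfl⟩
  | succ k ih =>
    intro f hf
    rw [pow_succ] at hf
    refine Submodule.mul_induction_on hf ?_ ?_
    · intro x hx y hy d hd
      rw [MulMemClass.coe_mul, MvPowerSeries.coeff_mul] at hd
      obtain ⟨p, hp, hne⟩ := Finset.exists_ne_zero_of_sum_ne_zero hd
      rw [Finset.HasAntidiagonal.mem_antidiagonal] at hp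
      obtain ⟨e, he, hsum⟩ := ih x hx p.1 (left_ne_zero_of_mul hne)
      refine ⟨Fin.cons p.2 e, ?_, ?_⟩
      · intro j
        refine Fin.cases ?_ ?_ j
        · exact Set.mem_biUnion hy ⟨p.2, right_ne_zero_of_mul hne, rfl⟩
        · intro i; simpa using he i
      · rw [Fin.sum_cons, ← hsum, add_comm, hp]
    · intro x y hx hy d hd
      rw [AddMemClass.coe_add, map_add] at hd
      by_cases h1 : MvPowerSeries.coeff d (x : MvPowerSeries (Fin n) ℂ) ≠ 0
      · exact hx d h1
      · push_neg at h1
        exact hy d (by simpa [h1] using hd)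

end Aux
/-- for a finitely generated ideal `I = ⟨g₁, …, g_l⟩`,
`C(Ī) ⊆ Γ₊(I)`. -/
theorem cIbar_subset_newton
    (n r : ℕ) (hn : 1 ≤ n) (hr : 1 ≤ r) (b : Fin r → Fin n → ℤ)
    (hb_ne : ∀ i, b i ≠ 0) (hb_nonneg : ∀ i j, 0 ≤ b i j)
    (hb_gen : AddSubgroup.closure (Set.range b) = (⊤ : AddSubgroup (Fin n → ℤ)))
    (hdim : Submodule.span ℝ (coneS b) = (⊤ : Submodule ℝ (Fin n → ℝ)))
    (hstrict : ∀ x ∈ coneS b, -x ∈ coneS b → x = (0 : Fin n → ℝ))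
    (l : ℕ) (g : Fin l → ↥(RS b)) (I : Ideal ↥(RS b))
    (hI : I = Ideal.span (Set.range g)) :
    CIbar b I ⊆ NewtonIdeal b I := by
  have hconv : Convex ℝ (NewtonIdeal b I) := convex_convexHull ℝ _
  refine convexHull_min ?_ hconv
  rintro x ⟨s, ⟨hsS, h, hmono, hint⟩, rfl⟩
  obtain ⟨m, hm, a, haI, heq⟩ := hint
  set D : Fin n →₀ ℕ := natExp s with hD
  have hsnn : ∀ j, 0 ≤ s j := sgroup_nonneg hb_nonneg hsS
  have hDs : ∀ t, ((D t : ℤ)) = s t := by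
    intro t
    simp [hD, natExp, Int.toNat_of_nonneg (hsnn t)]
  -- the coercion of h is a monomial
  have hpow : ∀ j : ℕ, ((h : MvPowerSeries (Fin n) ℂ)) ^ j
      = MvPowerSeries.monomial (j • D) 1 := by
    intro j; rw [hmono]; exact monomial_one_pow D j
  -- coefficient equation at m • D
  have heq' : ((h : MvPowerSeries (Fin n) ℂ)) ^ m
      + ∑ i : Fin m, (a i : MvPowerSeries (Fin n) ℂ)
          * ((h : MvPowerSeries (Fin n) ℂ)) ^ (m - 1 - (i : ℕ)) = 0 := by
    have := congrArg (fun z : ↥(RS b) => (z : MvPowerSeries (Fin n) ℂ)) heq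
    push_cast at this
    simpa using this
  have hcoeff : (1 : ℂ) + ∑ i : Fin m,
      MvPowerSeries.coeff (m • D)
        ((a i : MvPowerSeries (Fin n) ℂ)
          * ((h : MvPowerSeries (Fin n) ℂ)) ^ (m - 1 - (i : ℕ))) = 0 := by
    have := congrArg (MvPowerSeries.coeff (m • D)) heq'
    rw [map_add, map_sum, map_zero, hpow m, MvPowerSeries.coeff_monomial_same] at this
    exact this
  have hsumne : (∑ i : Fin m,
      MvPowerSeries.coeff (m • D)
        ((a i : MvPowerSeries (Fin n) ℂ)
          * ((h : MvPowerSeries (Fin n) ℂ)) ^ (m - 1 - (i : ℕ)))) ≠ 0 := by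
    intro hzero
    rw [hzero, add_zero] at hcoeff
    exact one_ne_zero hcoeff
  obtain ⟨i, _, hine⟩ := Finset.exists_ne_zero_of_sum_ne_zero hsumne
  rw [hpow, MvPowerSeries.coeff_mul] at hine
  obtain ⟨p, hp, hne⟩ := Finset.exists_ne_zero_of_sum_ne_zero hine
  rw [Finset.HasAntidiagonal.mem_antidiagonal] at hp
  have hp2 : p.2 = (m - 1 - (i : ℕ)) • D := by
    by_contra hc
    rw [MvPowerSeries.coeff_monomial, if_neg hc, mul_zero] at hne
    exact hne rfl
  obtain ⟨e, he, hsum⟩ := supp_pow_decomp I (i : ℕ) (a i) (haI i) p.1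
    (left_ne_zero_of_mul hne)
  -- coordinatewise relation : ∑_j e j t = (i+1) * D t
  have hkey : ∀ t, (∑ j : Fin ((i : ℕ) + 1), e j t) = ((i : ℕ) + 1) * D t := by
    intro t
    have him : (i : ℕ) + 1 ≤ m := i.isLt
    have hpt : p.1 t + p.2 t = m * D t := by
      have := congrArg (fun q : Fin n →₀ ℕ => q t) hp
      simpa [Finsupp.add_apply, Finsupp.smul_apply] using this
    have hp2t : p.2 t = (m - 1 - (i : ℕ)) * D t := by
      have := congrArg (fun q : Fin n →₀ ℕ => q t) hp2
      simpa [Finsupp.smul_apply] using this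
    have hp1t : p.1 t = ∑ j : Fin ((i : ℕ) + 1), e j t := by
      have := congrArg (fun q : Fin n →₀ ℕ => q t) hsum
      simpa [Finsupp.finset_sum_apply] using this
    rw [hp1t, hp2t] at hpt
    have : (m - 1 - (i : ℕ)) + ((i : ℕ) + 1) = m := by omega
    nlinarith [hpt, this]
  -- now the convex combination
  have hkpos : (0 : ℝ) < (((i : ℕ) + 1 : ℕ) : ℝ) := by positivity
  have hmem : ∀ j : Fin ((i : ℕ) + 1), toReal (expToZ (e j)) ∈
      { x | ∃ kk ∈ ⋃ g ∈ (I : Set ↥(RS b)), suppZ (g : MvPowerSeries (Fin n) ℂ),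
          ∃ v ∈ coneS b, x = toReal kk + v } := by
    intro j
    exact ⟨expToZ (e j), he j, 0, coneS_zero_mem, by simp⟩
  have hcm := Finset.centerMass_mem_convexHull (Finset.univ : Finset (Fin ((i : ℕ) + 1)))
    (w := fun _ => (1 : ℝ)) (z := fun j => toReal (expToZ (e j)))
    (fun j _ => zero_le_one) (by simpa using hkpos) (fun j _ => hmem j)
  have hxeq : toReal s = Finset.centerMass (Finset.univ : Finset (Fin ((i : ℕ) + 1)))
      (fun _ => (1 : ℝ)) (fun j => toReal (expToZ (e j))) := by
    rw [Finset.centerMass]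
    funext t
    have h1 : (∑ j : Fin ((i : ℕ) + 1), (fun _ => (1:ℝ)) j) = (((i : ℕ) + 1 : ℕ) : ℝ) := by
      simp
    simp only [one_smul]
    rw [h1]
    have h2 : (∑ j : Fin ((i : ℕ) + 1), toReal (expToZ (e j))) t
        = ∑ j : Fin ((i : ℕ) + 1), ((e j t : ℕ) : ℝ) := by
      rw [Finset.sum_apply]
      simp [toReal, expToZ]
    have h3 : (∑ j : Fin ((i : ℕ) + 1), ((e j t : ℕ) : ℝ))
        = (((i : ℕ) + 1 : ℕ) : ℝ) * (D t : ℝ) := by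
      rw [← Nat.cast_sum, hkey t]
      push_cast
      ring
    show toReal s t = (((i : ℕ) + 1 : ℕ) : ℝ)⁻¹ * ((∑ j : Fin ((i : ℕ) + 1), toReal (expToZ (e j))) t)
    rw [h2, h3, inv_mul_cancel_left₀ (ne_of_gt hkpos)]
    simp [toReal, ← hDs t]
  rw [hxeq]
  exact hcm


end ToricNewton
end
end

section
/- Let n = 2 and S₀ = {(1,0), (1,1), (1,2)} (the semigroup of the toric surface xz = y²). In R_S let I be the ideal generated by f = x^{(3,1)} + 3·x^{(3,2)} and g = x^{(3,3)} − x^{(2,1)} + x^{(2,4)}. Then (2,2) ∈ Γ₊(I), so the monomial x^{(2,2)} belongs to I°, but x^{(2,2)} is not integral over I; in particular I° is not contained in Ī. -/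
open scoped BigOperators

noncomputable section

namespace ToricNewton

/-- The generators `S₀ = {(1,0), (1,1), (1,2)}` of the semigroup of the toric
surface `xz = y²`. -/
def bEx : Fin 3 → Fin 2 → ℤ := ![![1, 0], ![1, 1], ![1, 2]]


/-! ### Auxiliary development for the proof -/

/-- Exponent finsupp `(a, b)`. -/
def D (a b : ℕ) : Fin 2 →₀ ℕ := Finsupp.equivFunOnFinite.symm ![a, b]

@[simp] lemma D_apply0 (a b : ℕ) : D a b 0 = a := rfl
@[simp] lemma D_apply1 (a b : ℕ) : D a b 1 = b := rfl

lemma D_repr (d : Fin 2 →₀ ℕ) : D (d 0) (d 1) = d := by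
  have : ![d 0, d 1] = ⇑d := by
    funext i; fin_cases i <;> rfl
  rw [D, this, Finsupp.equivFunOnFinite_symm_coe]

lemma D_eq_iff {a b a' b' : ℕ} : D a b = D a' b' ↔ a = a' ∧ b = b' := by
  constructor
  · intro h
    exact ⟨by rw [← D_apply0 a b, h, D_apply0], by rw [← D_apply1 a b, h, D_apply1]⟩
  · rintro ⟨rfl, rfl⟩; rfl

lemma D_add (a b a' b' : ℕ) : D a b + D a' b' = D (a+a') (b+b') := by
  rw [← D_repr (D a b + D a' b')]
  simp

/-- The "substitute `x₂ = 1`, `x₁ = t`" linear map. -/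
def Phi : MvPowerSeries (Fin 2) ℂ →ₗ[ℂ] PowerSeries ℂ where
  toFun F := PowerSeries.mk fun k => ∑ b ∈ Finset.range (2*k+1), MvPowerSeries.coeff (D k b) F
  map_add' F G := by
    ext k
    simp [Finset.sum_add_distrib]
  map_smul' c F := by
    ext k
    simp [Finset.mul_sum]

lemma Phi_coeff (F : MvPowerSeries (Fin 2) ℂ) (k : ℕ) :
    PowerSeries.coeff k (Phi F) = ∑ b ∈ Finset.range (2*k+1), MvPowerSeries.coeff (D k b) F := by
  simp [Phi, PowerSeries.coeff_mk]

/-- The support condition that holds for elements of `R_S`. -/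
def SuppOK (F : MvPowerSeries (Fin 2) ℂ) : Prop :=
  ∀ d : Fin 2 →₀ ℕ, MvPowerSeries.coeff d F ≠ 0 → d 1 ≤ 2 * d 0

lemma Phi_mul {F G : MvPowerSeries (Fin 2) ℂ} (hF : SuppOK F) (hG : SuppOK G) :
    Phi (F * G) = Phi F * Phi G := by
  ext k
  rw [PowerSeries.coeff_mul, Phi_coeff]
  have hR : ∀ p : ℕ × ℕ, p ∈ Finset.HasAntidiagonal.antidiagonal k →
      PowerSeries.coeff p.1 (Phi F) * PowerSeries.coeff p.2 (Phi G) =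
      ∑ q ∈ Finset.range (2*p.1+1) ×ˢ Finset.range (2*p.2+1),
        MvPowerSeries.coeff (D p.1 q.1) F * MvPowerSeries.coeff (D p.2 q.2) G := by
    intro p _
    rw [Phi_coeff, Phi_coeff, Finset.sum_mul_sum, Finset.sum_product]
  rw [Finset.sum_congr rfl hR]
  have hL : ∀ c ∈ Finset.range (2*k+1),
      MvPowerSeries.coeff (D k c) (F * G) =
      ∑ p ∈ (Finset.HasAntidiagonal.antidiagonal (D k c)).filter
          (fun p => p.1 1 ≤ 2 * p.1 0 ∧ p.2 1 ≤ 2 * p.2 0),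
        MvPowerSeries.coeff p.1 F * MvPowerSeries.coeff p.2 G := by
    intro c _
    rw [MvPowerSeries.coeff_mul]
    refine (Finset.sum_filter_of_ne ?_).symm
    intro p _ hne
    exact ⟨hF p.1 (left_ne_zero_of_mul hne), hG p.2 (right_ne_zero_of_mul hne)⟩
  rw [Finset.sum_congr rfl hL]
  rw [Finset.sum_sigma', Finset.sum_sigma']
  refine Finset.sum_nbij'
    (fun x => ⟨(x.2.1 0, x.2.2 0), (x.2.1 1, x.2.2 1)⟩)
    (fun y => ⟨y.2.1 + y.2.2, (D y.1.1 y.2.1, D y.1.2 y.2.2)⟩)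
    ?_ ?_ ?_ ?_ ?_
  · rintro ⟨c, p⟩ hx
    simp only [Finset.mem_sigma, Finset.mem_range, Finset.mem_filter,
      Finset.HasAntidiagonal.mem_antidiagonal, Finset.mem_product] at hx ⊢
    obtain ⟨hc, hadd, h1, h2⟩ := hx
    have e0 : p.1 0 + p.2 0 = k := by
      have := congrArg (fun d => d 0) hadd
      simpa [Finsupp.add_apply] using this
    refine ⟨e0, ?_, ?_⟩ <;> omega
  · rintro ⟨⟨a₁, a₂⟩, ⟨b₁, b₂⟩⟩ hy
    simp only [Finset.mem_sigma, Finset.mem_range, Finset.mem_filter,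
      Finset.HasAntidiagonal.mem_antidiagonal, Finset.mem_product] at hy ⊢
    obtain ⟨ha, hb₁, hb₂⟩ := hy
    refine ⟨by omega, ?_, by simpa using ⟨by omega, by omega⟩⟩
    rw [D_add, ha]
  · rintro ⟨c, p⟩ hx
    simp only [Finset.mem_sigma, Finset.mem_range, Finset.mem_filter,
      Finset.HasAntidiagonal.mem_antidiagonal, Finset.mem_product] at hx
    obtain ⟨hc, hadd, h1, h2⟩ := hx
    have e1 : p.1 1 + p.2 1 = c := by
      have := congrArg (fun d => d 1) hadd
      simpa [Finsupp.add_apply] using this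
    refine Sigma.ext e1 (heq_of_eq ?_)
    simp [D_repr]
  · rintro ⟨⟨a₁, a₂⟩, ⟨b₁, b₂⟩⟩ hy
    simp
  · rintro ⟨c, p⟩ hx
    simp [D_repr]

lemma Phi_one : Phi 1 = 1 := by
  ext k
  rw [Phi_coeff]
  have : ∀ b : ℕ, MvPowerSeries.coeff (D k b) (1 : MvPowerSeries (Fin 2) ℂ)
      = if k = 0 ∧ b = 0 then 1 else 0 := by
    intro b
    rw [MvPowerSeries.coeff_one]
    congr 1
    rw [show (0 : Fin 2 →₀ ℕ) = D 0 0 from by ext i; fin_cases i <;> rfl, D_eq_iff]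
  simp only [this]
  rcases k with _ | k
  · simp [PowerSeries.coeff_zero_eq_constantCoeff]
  · rw [PowerSeries.coeff_one]
    simp

lemma Phi_monomial (a b : ℕ) (hb : b ≤ 2*a) (c : ℂ) :
    Phi (MvPowerSeries.monomial (D a b) c) = PowerSeries.monomial a c := by
  ext k
  rw [Phi_coeff, PowerSeries.coeff_monomial]
  have : ∀ b' : ℕ, MvPowerSeries.coeff (D k b') (MvPowerSeries.monomial (D a b) c)
      = if k = a ∧ b' = b then c else 0 := by
    intro b'
    rw [MvPowerSeries.coeff_monomial]
    congr 1
    rw [D_eq_iff]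
  simp only [this]
  by_cases hk : k = a
  · subst hk
    simp only [true_and]
    rw [Finset.sum_ite_eq' (Finset.range (2*k+1)) b (fun _ => c)]
    simp [Nat.lt_succ_iff, hb]
  · simp [hk]

lemma mem_Sgroup_bEx {s : Fin 2 → ℤ} (hs : s ∈ Sgroup bEx) :
    0 ≤ s 0 ∧ 0 ≤ s 1 ∧ s 1 ≤ 2 * s 0 := by
  induction hs using AddSubmonoid.closure_induction with
  | mem x hx =>
    obtain ⟨i, rfl⟩ := hx
    fin_cases i <;> decide
  | zero => simp
  | add x y hx hy ihx ihy =>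
    simp only [Pi.add_apply]
    constructor
    · linarith [ihx.1, ihy.1]
    constructor
    · linarith [ihx.2.1, ihy.2.1]
    · linarith [ihx.2.2, ihy.2.2]

lemma suppOK_of_mem {F : MvPowerSeries (Fin 2) ℂ} (hF : F ∈ RS bEx) : SuppOK F := by
  intro d hd
  have h := hF d hd
  have h2 := (mem_Sgroup_bEx h).2.2
  have h0 : expToZ d 0 = (d 0 : ℤ) := rfl
  have h1 : expToZ d 1 = (d 1 : ℤ) := rfl
  rw [h0, h1] at h2
  exact_mod_cast h2

/-- The evaluation ring homomorphism `χ : R_S → ℂ[[t]]`, `x₁ ↦ t`, `x₂ ↦ 1`. -/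
def chi : ↥(RS bEx) →+* PowerSeries ℂ where
  toFun F := Phi (F : MvPowerSeries (Fin 2) ℂ)
  map_one' := Phi_one
  map_mul' x y := Phi_mul (suppOK_of_mem x.2) (suppOK_of_mem y.2)
  map_zero' := map_zero Phi
  map_add' x y := map_add Phi _ _

lemma chi_apply (F : ↥(RS bEx)) : chi F = Phi (F : MvPowerSeries (Fin 2) ℂ) := rfl

lemma natExp31 : natExp ![(3:ℤ), 1] = D 3 1 := by
  unfold natExp D; congr 1; funext i; fin_cases i <;> rfl
lemma natExp32 : natExp ![(3:ℤ), 2] = D 3 2 := by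
  unfold natExp D; congr 1; funext i; fin_cases i <;> rfl
lemma natExp33 : natExp ![(3:ℤ), 3] = D 3 3 := by
  unfold natExp D; congr 1; funext i; fin_cases i <;> rfl
lemma natExp21 : natExp ![(2:ℤ), 1] = D 2 1 := by
  unfold natExp D; congr 1; funext i; fin_cases i <;> rfl
lemma natExp24 : natExp ![(2:ℤ), 4] = D 2 4 := by
  unfold natExp D; congr 1; funext i; fin_cases i <;> rfl
lemma natExp22 : natExp ![(2:ℤ), 2] = D 2 2 := by
  unfold natExp D; congr 1; funext i; fin_cases i <;> rfl

lemma ideal_pow_mono {R : Type*} [CommRing R] {I J : Ideal R} (h : I ≤ J) (n : ℕ) :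
    I ^ n ≤ J ^ n := by
  induction n with
  | zero => simp
  | succ n ih =>
    rw [pow_succ, pow_succ]
    exact Ideal.mul_mono ih h

set_option maxHeartbeats 1600000
set_option synthInstance.maxHeartbeats 400000

/-- for `I = ⟨x^{(3,1)} + 3x^{(3,2)}, x^{(3,3)} − x^{(2,1)} + x^{(2,4)}⟩`
one has `(2,2) ∈ Γ₊(I)`, hence `x^{(2,2)} ∈ I°`, but `x^{(2,2)}` is not integral
over `I`; in particular `I°` is not contained in `Ī`. -/
theorem example_icirc_not_subset_closure
    (f g m : ↥(RS bEx))
    (hf : (f : MvPowerSeries (Fin 2) ℂ) = monomialZ ![3, 1] + (3 : ℂ) • monomialZ ![3, 2])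
    (hg : (g : MvPowerSeries (Fin 2) ℂ) =
      monomialZ ![3, 3] - monomialZ ![2, 1] + monomialZ ![2, 4])
    (hm : (m : MvPowerSeries (Fin 2) ℂ) = monomialZ ![2, 2]) :
    toReal ![2, 2] ∈ NewtonIdeal bEx (Ideal.span {f, g}) ∧
    m ∈ Icirc bEx (Ideal.span {f, g}) ∧
    ¬ IsIntegralOverIdeal (Ideal.span {f, g}) m ∧
    ¬ ∀ h ∈ Icirc bEx (Ideal.span {f, g}),
        IsIntegralOverIdeal (Ideal.span {f, g}) h := by
  classical
  have hzero_cone : (0 : Fin 2 → ℝ) ∈ coneS bEx := ⟨0, fun i => le_refl 0, by simp⟩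
  have hgI : g ∈ Ideal.span ({f, g} : Set ↥(RS bEx)) :=
    Ideal.subset_span (Set.mem_insert_of_mem _ rfl)
  -- the two support points (2,1) and (2,4) of g
  have hco1 : MvPowerSeries.coeff (D 2 1) (g : MvPowerSeries (Fin 2) ℂ) ≠ 0 := by
    rw [hg, monomialZ, monomialZ, monomialZ, natExp33, natExp21, natExp24, map_add, map_sub]
    simp [MvPowerSeries.coeff_monomial, D_eq_iff]
  have hco2 : MvPowerSeries.coeff (D 2 4) (g : MvPowerSeries (Fin 2) ℂ) ≠ 0 := by
    rw [hg, monomialZ, monomialZ, monomialZ, natExp33, natExp21, natExp24, map_add, map_sub]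
    simp [MvPowerSeries.coeff_monomial, D_eq_iff]
  have hk1 : (![2, 1] : Fin 2 → ℤ) ∈
      (⋃ q ∈ ((Ideal.span {f, g} : Ideal ↥(RS bEx)) : Set ↥(RS bEx)),
        suppZ (q : MvPowerSeries (Fin 2) ℂ)) :=
    Set.mem_biUnion hgI ⟨D 2 1, hco1, by funext i; fin_cases i <;> rfl⟩
  have hk2 : (![2, 4] : Fin 2 → ℤ) ∈
      (⋃ q ∈ ((Ideal.span {f, g} : Ideal ↥(RS bEx)) : Set ↥(RS bEx)),
        suppZ (q : MvPowerSeries (Fin 2) ℂ)) :=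
    Set.mem_biUnion hgI ⟨D 2 4, hco2, by funext i; fin_cases i <;> rfl⟩
  have key1 : toReal ![2, 2] ∈ NewtonIdeal bEx (Ideal.span {f, g}) := by
    rw [NewtonIdeal, NewtonPoly]
    have heqc : toReal ![2, 2] = (2/3 : ℝ) • toReal ![2, 1] + (1/3 : ℝ) • toReal ![2, 4] := by
      funext i; fin_cases i <;> · simp [toReal]; norm_num
    rw [heqc]
    refine (convex_convexHull ℝ _)
      (subset_convexHull ℝ _ ?_) (subset_convexHull ℝ _ ?_)
      (by norm_num) (by norm_num) (by norm_num)
    · exact ⟨![2, 1], hk1, 0, hzero_cone, by simp⟩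
    · exact ⟨![2, 4], hk2, 0, hzero_cone, by simp⟩
  have hSmem : (![2, 2] : Fin 2 → ℤ) ∈ Sgroup bEx := by
    have := (Sgroup bEx).add_mem
      (AddSubmonoid.subset_closure ⟨0, rfl⟩) (AddSubmonoid.subset_closure ⟨2, rfl⟩)
    have he : bEx 0 + bEx 2 = ![2, 2] := by funext i; fin_cases i <;> decide
    rwa [he] at this
  have key2 : m ∈ Icirc bEx (Ideal.span {f, g}) :=
    Ideal.subset_span ⟨![2, 2], hSmem, key1, hm⟩
  have key3 : ¬ IsIntegralOverIdeal (Ideal.span {f, g}) m := by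
    rintro ⟨M, hMpos, a, ha, heq⟩
    have hchim : chi m = PowerSeries.X ^ 2 := by
      rw [chi_apply, hm, monomialZ, natExp22, Phi_monomial 2 2 (by norm_num),
        ← PowerSeries.X_pow_eq]
    have hchif : chi f ∈ Ideal.span {(PowerSeries.X : PowerSeries ℂ) ^ 3} := by
      have hsm : (3 : ℂ) • MvPowerSeries.monomial (D 3 2) (1 : ℂ)
          = MvPowerSeries.monomial (D 3 2) (3 : ℂ) := by
        rw [← map_smul (MvPowerSeries.monomial (D 3 2)) (3 : ℂ) 1]
        norm_num
      rw [chi_apply, hf, monomialZ, monomialZ, natExp31, natExp32, hsm, map_add,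
        Phi_monomial 3 1 (by norm_num), Phi_monomial 3 2 (by norm_num),
        Ideal.mem_span_singleton, PowerSeries.X_pow_dvd_iff]
      intro n hn
      simp only [map_add, PowerSeries.coeff_monomial]
      split_ifs with h
      · omega
      · simp
    have hchig : chi g ∈ Ideal.span {(PowerSeries.X : PowerSeries ℂ) ^ 3} := by
      rw [chi_apply, hg, monomialZ, monomialZ, monomialZ, natExp33, natExp21, natExp24,
        map_add, map_sub, Phi_monomial 3 3 (by norm_num), Phi_monomial 2 1 (by norm_num),
        Phi_monomial 2 4 (by norm_num), Ideal.mem_span_singleton, PowerSeries.X_pow_dvd_iff]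
      intro n hn
      simp only [map_add, map_sub, PowerSeries.coeff_monomial]
      split_ifs with h1 h2 <;> first | omega | ring
    have hIle : Ideal.span ({f, g} : Set ↥(RS bEx)) ≤
        Ideal.comap chi (Ideal.span {(PowerSeries.X : PowerSeries ℂ) ^ 3}) := by
      rw [Ideal.span_le]
      rintro x hx
      simp only [Set.mem_insert_iff, Set.mem_singleton_iff] at hx
      rcases hx with rfl | rfl
      · exact Ideal.mem_comap.mpr hchif
      · exact Ideal.mem_comap.mpr hchig
    have hdvd : ∀ i : Fin M, (PowerSeries.X : PowerSeries ℂ) ^ (2*M+1) ∣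
        chi (a i) * (PowerSeries.X ^ 2) ^ (M - 1 - (i : ℕ)) := by
      intro i
      have h1 : a i ∈ (Ideal.comap chi
          (Ideal.span {(PowerSeries.X : PowerSeries ℂ) ^ 3})) ^ ((i : ℕ) + 1) :=
        ideal_pow_mono hIle ((i : ℕ) + 1) (ha i)
      have h2 : chi (a i) ∈
          (Ideal.span {(PowerSeries.X : PowerSeries ℂ) ^ 3}) ^ ((i : ℕ) + 1) :=
        Ideal.mem_comap.mp (Ideal.le_comap_pow chi ((i : ℕ) + 1) h1)
      rw [Ideal.span_singleton_pow, Ideal.mem_span_singleton, ← pow_mul] at h2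
      have hle : (PowerSeries.X : PowerSeries ℂ) ^ (2*M+1) ∣
          PowerSeries.X ^ (3 * ((i : ℕ) + 1)) * PowerSeries.X ^ (2 * (M - 1 - (i : ℕ))) := by
        rw [← pow_add]
        exact pow_dvd_pow _ (by have := i.isLt; omega)
      refine hle.trans (mul_dvd_mul h2 ?_)
      rw [← pow_mul]
    have h0 := congrArg chi heq
    simp only [map_add, map_pow, map_mul, map_sum, map_zero, hchim] at h0
    have hc := congrArg (PowerSeries.coeff (2*M)) h0
    rw [map_add, map_sum, map_zero] at hc
    have hterm : ∀ i : Fin M, i ∈ (Finset.univ : Finset (Fin M)) →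
        PowerSeries.coeff (2*M) (chi (a i) * (PowerSeries.X ^ 2) ^ (M - 1 - (i : ℕ))) = 0 := by
      intro i _
      exact (PowerSeries.X_pow_dvd_iff.mp (hdvd i)) (2*M) (by omega)
    rw [Finset.sum_eq_zero hterm, ← pow_mul, PowerSeries.coeff_X_pow] at hc
    simp at hc
  exact ⟨key1, key2, key3, fun hall => key3 (hall m key2)⟩

end ToricNewton
end
end
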